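/- arXiv:2112.02398 — 7 statements merged into one kernel-verified Lean document; each statement's English description precedes it below -/
import Mathlib

section
/- If m is a metric on I of unit length linearly expanded by f with factor λ (i.e. f*m = λm), and h: I → I is defined by h(x) = m([0,x]), then h ∘ f = g ∘ h on each monotonicity interval of f, where g is the piecewise linear map with constant slope λ and turning points h(c_i). In particular, for x, y in the same monotonicity interval I_k: |h(f(y)) − h(f(x))| = λ·|h(y) − h(x)|. -/
open Set

/-- A piecewise monotone map of degree `d` on `I = [0,1]`:
a continuous map with `f(∂I) ⊆ ∂I` and turning points `c 0 = 0 < c 1 < ... < c d = 1`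
such that `f` is strictly monotone on each `[c k, c (k+1)]`, with alternating monotonicity. -/
structure PwMono (d : ℕ) : Type where
  f : ℝ → ℝ
  c : ℕ → ℝ
  pos : 0 < d
  cont : ContinuousOn f (Set.Icc 0 1)
  maps : Set.MapsTo f (Set.Icc 0 1) (Set.Icc 0 1)
  bdry0 : f 0 = 0 ∨ f 0 = 1
  bdry1 : f 1 = 0 ∨ f 1 = 1
  c0 : c 0 = 0
  cd : c d = 1
  cmono : StrictMonoOn c (Set.Iic d)
  piece : ∀ k < d, StrictMonoOn f (Set.Icc (c k) (c (k+1))) ∨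
    StrictAntiOn f (Set.Icc (c k) (c (k+1)))
  alt : ∀ k, k + 1 < d →
    (StrictMonoOn f (Set.Icc (c k) (c (k+1))) ↔ ¬ StrictMonoOn f (Set.Icc (c (k+1)) (c (k+2))))

/-- The pullback operator on metrics: `(f*m)(J) = ∑ₖ m (f (J ∩ Iₖ))`. -/
noncomputable def pullback (f : ℝ → ℝ) (d : ℕ) (c : ℕ → ℝ) (m : Set ℝ → ℝ) : Set ℝ → ℝ :=
  fun J => ∑ k ∈ Finset.range d, m (f '' (J ∩ Set.Icc (c k) (c (k+1))))

/-- The metric induced by Lebesgue measure. -/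
noncomputable def leb : Set ℝ → ℝ := fun S => (MeasureTheory.volume S).toReal

/-- A metric on `I`: a nonnegative functional on arcs, additive on adjacent arcs. -/
def IsArcMetric (m : Set ℝ → ℝ) : Prop :=
  (∀ x y : ℝ, 0 ≤ m (Set.Icc x y)) ∧
  (∀ x y z : ℝ, x ≤ y → y ≤ z → m (Set.Icc x z) = m (Set.Icc x y) + m (Set.Icc y z))

private lemma img_mono {f : ℝ → ℝ} {x y : ℝ} (hxy : x ≤ y)
    (hc : ContinuousOn f (Set.Icc x y)) (hmo : MonotoneOn f (Set.Icc x y)) :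
    f '' Set.Icc x y = Set.Icc (f x) (f y) := by
  apply Set.Subset.antisymm
  · rintro _ ⟨w, hw, rfl⟩
    exact ⟨hmo (Set.left_mem_Icc.mpr hxy) hw hw.1, hmo hw (Set.right_mem_Icc.mpr hxy) hw.2⟩
  · exact intermediate_value_Icc hxy hc

private lemma img_anti {f : ℝ → ℝ} {x y : ℝ} (hxy : x ≤ y)
    (hc : ContinuousOn f (Set.Icc x y)) (hmo : AntitoneOn f (Set.Icc x y)) :
    f '' Set.Icc x y = Set.Icc (f y) (f x) := by
  apply Set.Subset.antisymm
  · rintro _ ⟨w, hw, rfl⟩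
    exact ⟨hmo hw (Set.right_mem_Icc.mpr hxy) hw.2, hmo (Set.left_mem_Icc.mpr hxy) hw hw.1⟩
  · exact intermediate_value_Icc' hxy hc

/-- a unit-length metric `m` linearly expanded by `f` with factor `λ`
defines, via `h(x) = m([0,x])`, a semiconjugacy of `f` to the piecewise linear map `g`
of constant slope `λ` with turning points `h (c i)`. -/
theorem stmt_4 (d : ℕ) (F : PwMono d) (m : Set ℝ → ℝ) (hm : IsArcMetric m)
    (hunit : m (Set.Icc (0 : ℝ) 1) = 1) (lam : ℝ) (hlam : 0 < lam)
    (hexp : ∀ x y : ℝ, 0 ≤ x → x ≤ y → y ≤ 1 →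
      pullback F.f d F.c m (Set.Icc x y) = lam * m (Set.Icc x y))
    (h : ℝ → ℝ) (hdef : ∀ x, h x = m (Set.Icc 0 x))
    -- m non-atomic with full support, so h is a homeomorphism of I
    (hcont : ContinuousOn h (Set.Icc 0 1)) (hmono : StrictMonoOn h (Set.Icc 0 1)) :
    (∀ k < d, ∀ x ∈ Set.Icc (F.c k) (F.c (k + 1)), ∀ y ∈ Set.Icc (F.c k) (F.c (k + 1)),
      |h (F.f y) - h (F.f x)| = lam * |h y - h x|) ∧
    ∃ g : ℝ → ℝ,
      (∀ k < d, ∀ x ∈ Set.Icc (h (F.c k)) (h (F.c (k + 1))),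
        ∀ y ∈ Set.Icc (h (F.c k)) (h (F.c (k + 1))), |g x - g y| = lam * |x - y|) ∧
      ∀ x ∈ Set.Icc (0 : ℝ) 1, h (F.f x) = g (h x) := by
  obtain ⟨mnn, madd⟩ := hm
  -- basic facts
  have msing : ∀ z : ℝ, m {z} = 0 := by
    intro z
    have := madd z z z le_rfl le_rfl
    have h0 : m (Set.Icc z z) = 0 := by linarith
    rwa [Set.Icc_self] at h0
  have menn : 0 ≤ m (∅ : Set ℝ) := by
    have : (∅ : Set ℝ) = Set.Icc 1 0 := (Set.Icc_eq_empty (by norm_num)).symm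
    rw [this]; exact mnn 1 0
  have hcmon : ∀ i j : ℕ, i ≤ j → j ≤ d → F.c i ≤ F.c j := fun i j hij hjd =>
    F.cmono.monotoneOn (Set.mem_Iic.mpr (hij.trans hjd)) (Set.mem_Iic.mpr hjd) hij
  have hcstrict : ∀ i j : ℕ, i < j → j ≤ d → F.c i < F.c j := fun i j hij hjd =>
    F.cmono (Set.mem_Iic.mpr (hij.le.trans hjd)) (Set.mem_Iic.mpr hjd) hij
  have hc0 : ∀ k : ℕ, k ≤ d → 0 ≤ F.c k := fun k hk => F.c0 ▸ hcmon 0 k (Nat.zero_le k) hk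
  have hc1 : ∀ k : ℕ, k ≤ d → F.c k ≤ 1 := fun k hk => F.cd ▸ hcmon k d hk le_rfl
  have hIk : ∀ k : ℕ, k < d → Set.Icc (F.c k) (F.c (k+1)) ⊆ Set.Icc (0:ℝ) 1 :=
    fun k hk => Set.Icc_subset_Icc (hc0 k hk.le) (hc1 (k+1) hk)
  -- m of empty set is zero when d ≥ 2
  have mempty : 2 ≤ d → m (∅ : Set ℝ) = 0 := by
    intro hd2
    have hc01 : F.c 0 < F.c 1 := hcstrict 0 1 one_pos (by omega)
    set x : ℝ := F.c 1 / 2 with hxdef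
    have hx0 : 0 < x := by rw [hxdef]; rw [F.c0] at hc01; linarith
    have hxc1 : x < F.c 1 := by rw [hxdef]; rw [F.c0] at hc01; linarith
    have hx1 : x ≤ 1 := le_of_lt (lt_of_lt_of_le hxc1 (hc1 1 (by omega)))
    have hsum := hexp x x hx0.le le_rfl hx1
    rw [Set.Icc_self, msing x, mul_zero] at hsum
    unfold pullback at hsum
    have hterm : ∀ j ∈ Finset.range d,
        m (F.f '' ({x} ∩ Set.Icc (F.c j) (F.c (j+1)))) =
          if j = 0 then 0 else m (∅ : Set ℝ) := by
      intro j hj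
      rcases Nat.eq_zero_or_pos j with rfl | hjpos
      · have hxmem : x ∈ Set.Icc (F.c 0) (F.c 1) := by
          constructor
          · rw [F.c0]; exact hx0.le
          · exact hxc1.le
        rw [if_pos rfl, Set.inter_eq_self_of_subset_left (Set.singleton_subset_iff.mpr hxmem),
          Set.image_singleton, msing]
      · have hxnot : x ∉ Set.Icc (F.c j) (F.c (j+1)) := by
          intro hmem
          exact absurd hmem.1 (not_le.mpr (lt_of_lt_of_le hxc1
            (hcmon 1 j hjpos (le_of_lt (Finset.mem_range.mp hj)))))
        rw [if_neg (by omega), Set.singleton_inter_eq_empty.mpr hxnot, Set.image_empty]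
    rw [Finset.sum_congr rfl hterm] at hsum
    have hnn : ∀ j ∈ Finset.range d, 0 ≤ if j = 0 then (0:ℝ) else m (∅ : Set ℝ) := by
      intro j _; split <;> [exact le_rfl; exact menn]
    have := (Finset.sum_eq_zero_iff_of_nonneg hnn).mp hsum 1 (Finset.mem_range.mpr (by omega))
    rwa [if_neg one_ne_zero] at this
  -- key lemma: on a lap, m (f '' J) = lam * m J
  have mkey : ∀ k, k < d → ∀ x y : ℝ, F.c k ≤ x → x ≤ y → y ≤ F.c (k+1) →
      m (F.f '' Set.Icc x y) = lam * m (Set.Icc x y) := by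
    intro k hk x y hckx hxy hyck
    have h0x : 0 ≤ x := le_trans (hc0 k hk.le) hckx
    have hy1 : y ≤ 1 := le_trans hyck (hc1 (k+1) hk)
    have hsum := hexp x y h0x hxy hy1
    unfold pullback at hsum
    rw [Finset.sum_eq_single_of_mem k (Finset.mem_range.mpr hk)] at hsum
    · rwa [Set.inter_eq_self_of_subset_left (Set.Icc_subset_Icc hckx hyck)] at hsum
    · intro j hj hjk
      have hjd := Finset.mem_range.mp hj
      have hd2 : 2 ≤ d := by omega
      rw [Set.Icc_inter_Icc]
      have hba : min y (F.c (j+1)) ≤ max x (F.c j) := by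
        rcases lt_or_ge j k with hlt | hle
        · calc min y (F.c (j+1)) ≤ F.c (j+1) := min_le_right _ _
            _ ≤ F.c k := hcmon (j+1) k hlt hk.le
            _ ≤ x := hckx
            _ ≤ max x (F.c j) := le_max_left _ _
        · have hkj : k + 1 ≤ j := by omega
          calc min y (F.c (j+1)) ≤ y := min_le_left _ _
            _ ≤ F.c (k+1) := hyck
            _ ≤ F.c j := hcmon (k+1) j hkj hjd.le
            _ ≤ max x (F.c j) := le_max_right _ _
      by_cases hab : max x (F.c j) ≤ min y (F.c (j+1))
      · have heq : max x (F.c j) ⊔ F.c j = max x (F.c j) := sup_eq_left.mpr (le_max_right _ _)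
        have heq2 : min y (F.c (j+1)) = max x (F.c j) := le_antisymm hba hab
        rw [heq2, Set.Icc_self, Set.image_singleton, msing]
      · rw [Set.Icc_eq_empty hab, Set.image_empty, mempty hd2]
  -- h differences are m of intervals
  have hdiff : ∀ x y : ℝ, 0 ≤ x → x ≤ y → h y - h x = m (Set.Icc x y) := by
    intro x y h0x hxy
    rw [hdef, hdef]
    have := madd 0 x y h0x hxy
    linarith
  -- part 1, ordered version
  have part1' : ∀ k, k < d → ∀ x ∈ Set.Icc (F.c k) (F.c (k+1)), ∀ y ∈ Set.Icc (F.c k) (F.c (k+1)),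
      x ≤ y → |h (F.f y) - h (F.f x)| = lam * |h y - h x| := by
    intro k hk x hx y hy hxy
    have h0x : 0 ≤ x := le_trans (hc0 k hk.le) hx.1
    have hyx : h y - h x = m (Set.Icc x y) := hdiff x y h0x hxy
    have hnn : 0 ≤ h y - h x := hyx ▸ mnn x y
    have hsub : Set.Icc x y ⊆ Set.Icc (F.c k) (F.c (k+1)) := Set.Icc_subset_Icc hx.1 hy.2
    have hcsub : ContinuousOn F.f (Set.Icc x y) := F.cont.mono (hsub.trans (hIk k hk))
    have hfx01 := F.maps ((hIk k hk) hx)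
    have hfy01 := F.maps ((hIk k hk) hy)
    have hmk := mkey k hk x y hx.1 hxy hy.2
    rcases F.piece k hk with hmo | han
    · have himg : F.f '' Set.Icc x y = Set.Icc (F.f x) (F.f y) :=
        img_mono hxy hcsub (hmo.monotoneOn.mono hsub)
      have hffxy : F.f x ≤ F.f y := hmo.monotoneOn hx hy hxy
      have hfd : h (F.f y) - h (F.f x) = m (Set.Icc (F.f x) (F.f y)) :=
        hdiff _ _ hfx01.1 hffxy
      rw [himg] at hmk
      rw [abs_of_nonneg hnn, abs_of_nonneg (by rw [hfd]; exact mnn _ _)]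
      rw [hfd, hmk, hyx]
    · have himg : F.f '' Set.Icc x y = Set.Icc (F.f y) (F.f x) :=
        img_anti hxy hcsub (han.antitoneOn.mono hsub)
      have hffxy : F.f y ≤ F.f x := han.antitoneOn hx hy hxy
      have hfd : h (F.f x) - h (F.f y) = m (Set.Icc (F.f y) (F.f x)) :=
        hdiff _ _ hfy01.1 hffxy
      rw [himg] at hmk
      rw [abs_of_nonneg hnn, abs_sub_comm, abs_of_nonneg (by rw [hfd]; exact mnn _ _)]
      rw [hfd, hmk, hyx]
  have part1 : ∀ k < d, ∀ x ∈ Set.Icc (F.c k) (F.c (k + 1)), ∀ y ∈ Set.Icc (F.c k) (F.c (k + 1)),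
      |h (F.f y) - h (F.f x)| = lam * |h y - h x| := by
    intro k hk x hx y hy
    rcases le_total x y with hxy | hyx
    · exact part1' k hk x hx y hy hxy
    · rw [abs_sub_comm, abs_sub_comm (h y)]
      exact part1' k hk y hy x hx hyx
  refine ⟨part1, ?_⟩
  have hinj : Set.InjOn h (Set.Icc 0 1) := hmono.injOn
  classical
  refine ⟨fun t => if ht : ∃ z, z ∈ Set.Icc (0:ℝ) 1 ∧ h z = t then h (F.f ht.choose) else 0,
    ?_, ?_⟩
  · intro k hk s hs t ht
    have hck1 : F.c k ≤ F.c (k+1) := (hcstrict k (k+1) (Nat.lt_succ_self k) hk).le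
    have himg : h '' Set.Icc (F.c k) (F.c (k+1)) = Set.Icc (h (F.c k)) (h (F.c (k+1))) :=
      img_mono hck1 (hcont.mono (hIk k hk)) (hmono.monotoneOn.mono (hIk k hk))
    rw [← himg] at hs ht
    obtain ⟨x, hx, rfl⟩ := hs
    obtain ⟨y, hy, rfl⟩ := ht
    have hgx : ∀ z ∈ Set.Icc (F.c k) (F.c (k+1)),
        (if ht : ∃ w, w ∈ Set.Icc (0:ℝ) 1 ∧ h w = h z then h (F.f ht.choose) else 0)
          = h (F.f z) := by
      intro z hz
      have hz01 : z ∈ Set.Icc (0:ℝ) 1 := hIk k hk hz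
      have hex : ∃ w, w ∈ Set.Icc (0:ℝ) 1 ∧ h w = h z := ⟨z, hz01, rfl⟩
      rw [dif_pos hex]
      obtain ⟨hw1, hw2⟩ := hex.choose_spec
      rw [hinj hw1 hz01 hw2]
    beta_reduce
    rw [hgx x hx, hgx y hy]
    exact part1 k hk y hy x hx
  · intro x hx
    have hex : ∃ w, w ∈ Set.Icc (0:ℝ) 1 ∧ h w = h x := ⟨x, hx, rfl⟩
    beta_reduce
    rw [dif_pos hex]
    obtain ⟨hw1, hw2⟩ := hex.choose_spec
    rw [hinj hw1 hx hw2]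
end

section
/- Let f be piecewise monotone, and for each n let f_n = Θ^n(f) with associated constant-slope maps g_n of slope s_n and homeomorphisms h_n satisfying f_n = g_n ∘ h_n and f_{n+1} = h_n ∘ g_n. Set H_n = h_{n-1} ∘ ... ∘ h_0. Then for all n ≥ 1: (f*)^n(m_0) = s_0 s_1 ⋯ s_{n-1} · H_n*(m_0), where m_0 is the Lebesgue metric. -/
open Set

/- ***** Auxiliary lemmas ***** -/

lemma stmt7_leb_Icc {a b : ℝ} (h : a ≤ b) : leb (Set.Icc a b) = b - a := by
  show (MeasureTheory.volume (Set.Icc a b)).toReal = b - a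
  rw [Real.volume_Icc, ENNReal.toReal_ofReal (by linarith)]

lemma stmt7_img_mono {f : ℝ → ℝ} {a b : ℝ} (hab : a ≤ b) (hc : ContinuousOn f (Icc a b))
    (hm : StrictMonoOn f (Icc a b)) : f '' Icc a b = Icc (f a) (f b) := by
  apply subset_antisymm
  · rintro t ⟨w, hw, rfl⟩
    exact ⟨hm.monotoneOn ⟨le_rfl, hab⟩ hw hw.1, hm.monotoneOn hw ⟨hab, le_rfl⟩ hw.2⟩
  · exact intermediate_value_Icc hab hc

lemma stmt7_img_anti {f : ℝ → ℝ} {a b : ℝ} (hab : a ≤ b) (hc : ContinuousOn f (Icc a b))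
    (hm : StrictAntiOn f (Icc a b)) : f '' Icc a b = Icc (f b) (f a) := by
  apply subset_antisymm
  · rintro t ⟨w, hw, rfl⟩
    exact ⟨hm.antitoneOn hw ⟨hab, le_rfl⟩ hw.2, hm.antitoneOn ⟨le_rfl, hab⟩ hw hw.1⟩
  · exact intermediate_value_Icc' hab hc

lemma stmt7_part_mem {d : ℕ} {c : ℕ → ℝ} (hm : StrictMonoOn c (Iic d)) (h0 : c 0 = 0)
    (hd : c d = 1) {i : ℕ} (hi : i ≤ d) : c i ∈ Icc (0:ℝ) 1 := by
  constructor
  · rw [← h0]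
    exact hm.monotoneOn (by simp) (by simpa using hi) (Nat.zero_le i)
  · rw [← hd]
    exact hm.monotoneOn (by simpa using hi) (by simp) hi

lemma stmt7_sum_clamp : ∀ (d : ℕ) (p : ℕ → ℝ), (∀ i j, i ≤ j → j ≤ d → p i ≤ p j) →
    ∀ (u v : ℝ), p 0 ≤ u → u ≤ v → v ≤ p d →
    ∑ k ∈ Finset.range d, max 0 (min v (p (k+1)) - max u (p k)) = v - u := by
  intro d
  induction d with
  | zero =>
    intro p hp u v h1 h2 h3
    simp only [Finset.range_zero, Finset.sum_empty]
    linarith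
  | succ d ih =>
    intro p hp u v h1 h2 h3
    rw [Finset.sum_range_succ]
    by_cases hud : u ≤ p d
    · have hv' : u ≤ min v (p d) := le_min h2 hud
      have ihs := ih p (fun i j hij hj => hp i j hij (by omega)) u (min v (p d)) h1 hv'
        (min_le_right _ _)
      have congrsum : ∑ k ∈ Finset.range d, max 0 (min v (p (k+1)) - max u (p k)) =
          ∑ k ∈ Finset.range d, max 0 (min (min v (p d)) (p (k+1)) - max u (p k)) := by
        apply Finset.sum_congr rfl
        intro k hk
        have hk' : k + 1 ≤ d := Finset.mem_range.mp hk
        have : min (min v (p d)) (p (k+1)) = min v (p (k+1)) := by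
          rw [min_assoc, min_eq_right (hp (k+1) d hk' (by omega))]
        rw [this]
      rw [congrsum, ihs]
      rw [min_eq_left h3]
      rcases le_total v (p d) with hvp | hvp
      · rw [min_eq_left hvp]
        have : v - max u (p d) ≤ 0 := by
          have := le_max_right u (p d); linarith
        rw [max_eq_left (by linarith)]
        linarith
      · rw [min_eq_right hvp, max_eq_right hud]
        rw [max_eq_right (by linarith)]
        linarith
    · push_neg at hud
      have hz : ∑ k ∈ Finset.range d, max 0 (min v (p (k+1)) - max u (p k)) = 0 := by
        apply Finset.sum_eq_zero
        intro k hk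
        have hk' : k + 1 ≤ d := Finset.mem_range.mp hk
        have h1' : min v (p (k+1)) ≤ p d := le_trans (min_le_right _ _) (hp (k+1) d hk' (by omega))
        have h2' : u ≤ max u (p k) := le_max_left _ _
        rw [max_eq_left (by linarith)]
      rw [hz, min_eq_left h3, max_eq_left hud.le, max_eq_right (by linarith)]
      linarith

lemma stmt7_affine_of_scale {g : ℝ → ℝ} {A B s : ℝ} (hs : 0 < s) (hAB : A < B)
    (hg : ∀ x ∈ Icc A B, ∀ y ∈ Icc A B, |g x - g y| = s * |x - y|) :
    (∀ x ∈ Icc A B, g x = g A + s * (x - A)) ∨ (∀ x ∈ Icc A B, g x = g A - s * (x - A)) := by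
  have hA : A ∈ Icc A B := ⟨le_rfl, hAB.le⟩
  have hB : B ∈ Icc A B := ⟨hAB.le, le_rfl⟩
  have hBA : |g B - g A| = s * (B - A) := by
    rw [hg B hB A hA, abs_of_pos (by linarith)]
  have key : ∀ x ∈ Icc A B, |g x - g A| = s * (x - A) ∧ |g B - g x| = s * (B - x) := by
    intro x hx
    constructor
    · rw [hg x hx A hA, abs_of_nonneg (by linarith [hx.1])]
    · rw [hg B hB x hx, abs_of_nonneg (by linarith [hx.2])]
  rcases (abs_pos.mp (by rw [hBA]; exact mul_pos hs (by linarith) : (0:ℝ) < |g B - g A|)).lt_or_gt with hgt | hlt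
  · right
    intro x hx
    obtain ⟨k1, k2⟩ := key x hx
    have hsum : |g x - g A| + |g B - g x| = -(g B - g A) := by
      rw [k1, k2, ← abs_of_neg hgt, hBA]; ring
    have e1 := le_abs_self (g x - g A)
    have e2 := le_abs_self (g B - g x)
    have e1' := neg_abs_le (g x - g A)
    have e2' := neg_abs_le (g B - g x)
    have : |g x - g A| = -(g x - g A) := by linarith
    linarith [k1, this]
  · left
    intro x hx
    obtain ⟨k1, k2⟩ := key x hx
    have hsum : |g x - g A| + |g B - g x| = g B - g A := by
      rw [k1, k2, ← abs_of_pos hlt, hBA]; ring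
    have e1 := le_abs_self (g x - g A)
    have e2 := le_abs_self (g B - g x)
    have : |g x - g A| = g x - g A := by linarith
    linarith [k1, this]

lemma stmt7_image_affine_plus {c s A α β : ℝ} (hs : 0 < s) (hab : α ≤ β) :
    (fun x => c + s * (x - A)) '' Icc α β = Icc (c + s*(α - A)) (c + s*(β - A)) := by
  ext t
  simp only [mem_image, mem_Icc]
  constructor
  · rintro ⟨w, ⟨h1, h2⟩, rfl⟩
    constructor <;> nlinarith
  · rintro ⟨h1, h2⟩
    refine ⟨A + (t - c)/s, ⟨?_, ?_⟩, ?_⟩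
    · have h3 : s * (α - A) ≤ t - c := by linarith
      calc α = A + (s * (α - A))/s := by field_simp; ring
        _ ≤ A + (t - c)/s := by gcongr
    · have h3 : t - c ≤ s * (β - A) := by linarith
      calc A + (t - c)/s ≤ A + (s * (β - A))/s := by gcongr
        _ = β := by field_simp; ring
    · field_simp; ring

lemma stmt7_image_affine_minus {c s A α β : ℝ} (hs : 0 < s) (hab : α ≤ β) :
    (fun x => c - s * (x - A)) '' Icc α β = Icc (c - s*(β - A)) (c - s*(α - A)) := by
  ext t
  simp only [mem_image, mem_Icc]
  constructor
  · rintro ⟨w, ⟨h1, h2⟩, rfl⟩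
    constructor <;> nlinarith
  · rintro ⟨h1, h2⟩
    refine ⟨A + (c - t)/s, ⟨?_, ?_⟩, ?_⟩
    · have h3 : s * (α - A) ≤ c - t := by linarith
      calc α = A + (s * (α - A))/s := by field_simp; ring
        _ ≤ A + (c - t)/s := by gcongr
    · have h3 : c - t ≤ s * (β - A) := by linarith
      calc A + (c - t)/s ≤ A + (s * (β - A))/s := by gcongr
        _ = β := by field_simp; ring
    · field_simp; ring

lemma stmt7_leb_scale_image {g : ℝ → ℝ} {A B s α β : ℝ} (hs : 0 < s) (hAB : A < B)
    (hg : ∀ x ∈ Icc A B, ∀ y ∈ Icc A B, |g x - g y| = s * |x - y|)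
    (hα : α ∈ Icc A B) (hβ : β ∈ Icc A B) (hab : α ≤ β) :
    leb (g '' Icc α β) = s * (β - α) := by
  have hsub : Icc α β ⊆ Icc A B := Icc_subset_Icc hα.1 hβ.2
  rcases stmt7_affine_of_scale hs hAB hg with hp | hm
  · have himg : g '' Icc α β = (fun x => g A + s * (x - A)) '' Icc α β :=
      image_congr (fun x hx => hp x (hsub hx))
    rw [himg, stmt7_image_affine_plus hs hab, stmt7_leb_Icc (by nlinarith)]
    ring
  · have himg : g '' Icc α β = (fun x => g A - s * (x - A)) '' Icc α β :=
      image_congr (fun x hx => hm x (hsub hx))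
    rw [himg, stmt7_image_affine_minus hs hab, stmt7_leb_Icc (by nlinarith)]
    ring

lemma stmt7_scale_mono_or_anti {g : ℝ → ℝ} {A B s : ℝ} (hs : 0 < s) (hAB : A < B)
    (hg : ∀ x ∈ Icc A B, ∀ y ∈ Icc A B, |g x - g y| = s * |x - y|) :
    (StrictMonoOn g (Icc A B) ∧ g A < g B) ∨ (StrictAntiOn g (Icc A B) ∧ g B < g A) := by
  rcases stmt7_affine_of_scale hs hAB hg with hp | hm
  · left
    constructor
    · intro x hx y hy hxy
      rw [hp x hx, hp y hy]; nlinarith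
    · rw [hp B ⟨hAB.le, le_rfl⟩]; nlinarith
  · right
    constructor
    · intro x hx y hy hxy
      rw [hm x hx, hm y hy]; nlinarith
    · rw [hm B ⟨hAB.le, le_rfl⟩]; nlinarith

lemma stmt7_partition_unique (d : ℕ) (f : ℝ → ℝ) (u v : ℕ → ℝ)
    (hu : StrictMonoOn u (Set.Iic d)) (hv : StrictMonoOn v (Set.Iic d))
    (hu0 : u 0 = 0) (hud : u d = 1) (hv0 : v 0 = 0) (hvd : v d = 1)
    (hup : ∀ k < d, StrictMonoOn f (Icc (u k) (u (k+1))) ∨ StrictAntiOn f (Icc (u k) (u (k+1))))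
    (hvp : ∀ k < d, StrictMonoOn f (Icc (v k) (v (k+1))) ∨ StrictAntiOn f (Icc (v k) (v (k+1))))
    (hva : ∀ k, k + 1 < d → (StrictMonoOn f (Icc (v k) (v (k+1))) ↔
      ¬ StrictMonoOn f (Icc (v (k+1)) (v (k+2))))) :
    ∀ i ≤ d, u i = v i := by
  classical
  have humem : ∀ i, i ≤ d → i ∈ Set.Iic d := fun i hi => by simpa using hi
  have vlt : ∀ i j, i < j → j ≤ d → v i < v j := fun i j hij hj =>
    hv (humem i (by omega)) (humem j hj) hij
  have ule : ∀ i j, i ≤ j → j ≤ d → u i ≤ u j := fun i j hij hj =>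
    hu.monotoneOn (humem i (by omega)) (humem j hj) hij
  have E : ∀ j, 1 ≤ j → j < d → ∃ k ≤ d, v j = u k := by
    intro j hj1 hjd
    obtain ⟨j', rfl⟩ : ∃ j', j = j' + 1 := ⟨j - 1, by omega⟩
    have hj2 : j' + 2 ≤ d := by omega
    have hv01 : v j' < v (j' + 1) := vlt j' (j'+1) (by omega) (by omega)
    have hv12 : v (j' + 1) < v (j' + 2) := vlt (j'+1) (j'+2) (by omega) hj2
    have hext : (∀ w ∈ Icc (v j') (v (j'+2)), w ≠ v (j'+1) → f w < f (v (j'+1))) ∨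
        (∀ w ∈ Icc (v j') (v (j'+2)), w ≠ v (j'+1) → f (v (j'+1)) < f w) := by
      rcases hvp j' (by omega) with m1 | a1
      · left
        have nm2 : ¬ StrictMonoOn f (Icc (v (j'+1)) (v (j'+1+1))) := (hva j' (by omega)).mp m1
        have a2 : StrictAntiOn f (Icc (v (j'+1)) (v (j'+2))) := by
          rcases hvp (j'+1) (by omega) with m2 | a2
          · exact absurd m2 nm2
          · exact a2
        intro w hw hne
        rcases le_or_gt w (v (j'+1)) with hwle | hwgt
        · have hwlt : w < v (j'+1) := lt_of_le_of_ne hwle hne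
          exact m1 ⟨hw.1, hwle⟩ ⟨hv01.le, le_rfl⟩ hwlt
        · exact a2 ⟨le_rfl, hv12.le⟩ ⟨hwgt.le, hw.2⟩ hwgt
      · right
        have nm1 : ¬ StrictMonoOn f (Icc (v j') (v (j'+1))) := by
          intro m1
          have h1 := m1 ⟨le_rfl, hv01.le⟩ ⟨hv01.le, le_rfl⟩ hv01
          have h2 := a1 ⟨le_rfl, hv01.le⟩ ⟨hv01.le, le_rfl⟩ hv01
          linarith
        have m2 : StrictMonoOn f (Icc (v (j'+1)) (v (j'+2))) := by
          by_contra hm2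
          exact nm1 ((hva j' (by omega)).mpr hm2)
        intro w hw hne
        rcases le_or_gt w (v (j'+1)) with hwle | hwgt
        · have hwlt : w < v (j'+1) := lt_of_le_of_ne hwle hne
          exact a1 ⟨hw.1, hwle⟩ ⟨hv01.le, le_rfl⟩ hwlt
        · exact m2 ⟨le_rfl, hv12.le⟩ ⟨hwgt.le, hw.2⟩ hwgt
    set t := v (j' + 1) with ht
    have ht0 : 0 < t := by rw [ht, ← hv0]; exact vlt 0 (j'+1) (by omega) (by omega)
    have ht1 : t < 1 := by rw [ht, ← hvd]; exact vlt (j'+1) d (by omega) le_rfl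
    set k₀ := Nat.findGreatest (fun k => u k ≤ t) d with hk₀def
    have hP0 : u 0 ≤ t := by rw [hu0]; exact ht0.le
    have hk0 : u k₀ ≤ t := Nat.findGreatest_spec (P := fun k => u k ≤ t) (Nat.zero_le d) hP0
    have hk0d : k₀ ≤ d := Nat.findGreatest_le d
    have hk0lt : k₀ < d := by
      rcases lt_or_eq_of_le hk0d with hlt | heq
      · exact hlt
      · exfalso; rw [heq, hud] at hk0; linarith
    have hnot : t < u (k₀ + 1) := by
      have := Nat.findGreatest_is_greatest (P := fun k => u k ≤ t)
        (lt_add_one k₀) (by omega : k₀ + 1 ≤ d)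
      exact lt_of_not_ge this
    refine ⟨k₀, hk0d, ?_⟩
    by_contra hne
    have hklt : u k₀ < t := lt_of_le_of_ne hk0 (fun hh => hne hh.symm)
    set w₁ := max (u k₀) (v j') with hw₁
    set w₂ := min (u (k₀+1)) (v (j'+2)) with hw₂
    have hw₁t : w₁ < t := max_lt hklt hv01
    have htw₂ : t < w₂ := lt_min hnot hv12
    have hw₁u : w₁ ∈ Icc (u k₀) (u (k₀+1)) := ⟨le_max_left _ _, by linarith⟩
    have hw₂u : w₂ ∈ Icc (u k₀) (u (k₀+1)) := ⟨by linarith, min_le_left _ _⟩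
    have htu : t ∈ Icc (u k₀) (u (k₀+1)) := ⟨hk0, hnot.le⟩
    have hw₁v : w₁ ∈ Icc (v j') (v (j'+2)) := ⟨le_max_right _ _, by linarith⟩
    have hw₂v : w₂ ∈ Icc (v j') (v (j'+2)) := ⟨by linarith, min_le_right _ _⟩
    rcases hup k₀ hk0lt with mU | aU
    · rcases hext with hmax | hmin
      · have h1 := mU htu hw₂u htw₂
        have h2 := hmax w₂ hw₂v (by linarith)
        linarith
      · have h1 := mU hw₁u htu hw₁t
        have h2 := hmin w₁ hw₁v (by linarith)
        linarith
    · rcases hext with hmax | hmin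
      · have h1 := aU hw₁u htu hw₁t
        have h2 := hmax w₁ hw₁v (by linarith)
        linarith
      · have h1 := aU htu hw₂u htw₂
        have h2 := hmin w₂ hw₂v (by linarith)
        linarith
  have up : ∀ j ≤ d, u j ≤ v j := by
    intro j
    induction j with
    | zero => intro _; rw [hu0, hv0]
    | succ j ih =>
      intro hj
      rcases eq_or_lt_of_le hj with heq | hlt
      · rw [heq, hud, hvd]
      · obtain ⟨k, hkd, hvk⟩ := E (j+1) (by omega) hlt
        have h1 : u j ≤ v j := ih (by omega)
        have h2 : v j < v (j+1) := vlt j (j+1) (by omega) hj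
        have h3 : u j < u k := by rw [← hvk]; linarith
        have hjk : j < k := by
          by_contra hh
          push_neg at hh
          have := ule k j hh (by omega)
          linarith
        calc u (j+1) ≤ u k := ule (j+1) k hjk hkd
          _ = v (j+1) := hvk.symm
  have down : ∀ i, ∀ j, j + i = d → v j ≤ u j := by
    intro i
    induction i with
    | zero =>
      intro j hj
      have hjc : j = d := by omega
      exact le_of_eq (by rw [hjc, hud, hvd])
    | succ i ih =>
      intro j hj
      rcases Nat.eq_zero_or_pos j with rfl | hj1
      · rw [hu0, hv0]
      · have hjd : j < d := by omega
        obtain ⟨k, hkd, hvk⟩ := E j hj1 hjd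
        have h2 : v (j+1) ≤ u (j+1) := ih (j+1) (by omega)
        have h3 : v j < v (j+1) := vlt j (j+1) (by omega) (by omega)
        have h4 : u k < u (j+1) := by rw [← hvk]; linarith
        have hkj : k ≤ j := by
          by_contra hh
          push_neg at hh
          have := ule (j+1) k hh hkd
          linarith
        calc v j = u k := hvk
          _ ≤ u j := ule k j hkj (by omega)
  intro i hi
  exact le_antisymm (up i hi) (down (d - i) i (by omega))

/-- in the tower algorithm, `(f*)ⁿ(m₀) = s₀ s₁ ⋯ s_{n-1} · Hₙ*(m₀)`
where `Hₙ = h_{n-1} ∘ ⋯ ∘ h₀`. -/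
theorem stmt_7 (d : ℕ) (F : ℕ → PwMono d) (g h : ℕ → ℝ → ℝ) (ct : ℕ → ℕ → ℝ) (s : ℕ → ℝ)
    (hs : ∀ n, 0 < s n)
    -- each g n is piecewise linear of constant slope s n with turning points ct n
    (hct0 : ∀ n, ct n 0 = 0) (hctd : ∀ n, ct n d = 1)
    (hctmono : ∀ n, StrictMonoOn (ct n) (Set.Iic d))
    (hgslope : ∀ n, ∀ k < d, ∀ x ∈ Set.Icc (ct n k) (ct n (k + 1)),
      ∀ y ∈ Set.Icc (ct n k) (ct n (k + 1)), |g n x - g n y| = s n * |x - y|)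
    -- g n has the same critical value vector as f n
    (hgcv : ∀ n, ∀ i ≤ d, g n (ct n i) = (F n).f ((F n).c i))
    -- each h n is an increasing homeomorphism of I fixing the endpoints,
    -- mapping the turning points of f n to those of g n
    (hhc : ∀ n, ContinuousOn (h n) (Set.Icc 0 1)) (hhm : ∀ n, StrictMonoOn (h n) (Set.Icc 0 1))
    (hh0 : ∀ n, h n 0 = 0) (hh1 : ∀ n, h n 1 = 1)
    (hhct : ∀ n, ∀ i ≤ d, h n ((F n).c i) = ct n i)
    -- tower relations:  f n = g n ∘ h n  and  f (n+1) = h n ∘ g n  on I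
    (hfac : ∀ n, ∀ x ∈ Set.Icc (0 : ℝ) 1, (F n).f x = g n (h n x))
    (hnext : ∀ n, ∀ x ∈ Set.Icc (0 : ℝ) 1, (F (n + 1)).f x = h n (g n x))
    -- H n = h (n-1) ∘ ⋯ ∘ h 0
    (H : ℕ → ℝ → ℝ) (hH0 : H 0 = id) (hHs : ∀ n, H (n + 1) = h n ∘ H n) :
    ∀ n : ℕ, 1 ≤ n → ∀ x y : ℝ, 0 ≤ x → x ≤ y → y ≤ 1 →
      (fun m => pullback (F 0).f d (F 0).c m)^[n] leb (Set.Icc x y) =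
        (∏ i ∈ Finset.range n, s i) * leb (H n '' Set.Icc x y) := by
  classical
  have hcmem : ∀ n, ∀ i ≤ d, (F n).c i ∈ Icc (0:ℝ) 1 := fun n i hi =>
    stmt7_part_mem (F n).cmono (F n).c0 (F n).cd hi
  have hctmem : ∀ n, ∀ i ≤ d, ct n i ∈ Icc (0:ℝ) 1 := fun n i hi =>
    stmt7_part_mem (hctmono n) (hct0 n) (hctd n) hi
  have mapsTo_of : ∀ (φ : ℝ → ℝ), StrictMonoOn φ (Icc 0 1) → φ 0 = 0 → φ 1 = 1 →
      MapsTo φ (Icc (0:ℝ) 1) (Icc 0 1) := by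
    intro φ hm h0 h1 x hx
    constructor
    · rw [← h0]
      exact hm.monotoneOn (by norm_num) hx hx.1
    · rw [← h1]
      exact hm.monotoneOn hx (by norm_num) hx.2
  have hmaps : ∀ n, MapsTo (h n) (Icc (0:ℝ) 1) (Icc 0 1) := fun n =>
    mapsTo_of _ (hhm n) (hh0 n) (hh1 n)
  -- the big induction: properties of H n
  have key : ∀ n, ContinuousOn (H n) (Icc 0 1) ∧ StrictMonoOn (H n) (Icc 0 1) ∧
      H n 0 = 0 ∧ H n 1 = 1 ∧ ∀ i ≤ d, H n ((F 0).c i) = (F n).c i := by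
    intro n
    induction n with
    | zero =>
      rw [hH0]
      exact ⟨continuousOn_id, strictMonoOn_id, rfl, rfl, fun i _ => rfl⟩
    | succ n ih =>
      obtain ⟨ihc, ihm, ih0, ih1, ihcrit⟩ := ih
      have ihmaps : MapsTo (H n) (Icc (0:ℝ) 1) (Icc 0 1) := mapsTo_of _ ihm ih0 ih1
      rw [hHs n]
      refine ⟨(hhc n).comp ihc ihmaps, (hhm n).comp ihm ihmaps, ?_, ?_, ?_⟩
      · show h n (H n 0) = 0
        rw [ih0, hh0]
      · show h n (H n 1) = 1
        rw [ih1, hh1]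
      · intro i hi
        show h n (H n ((F 0).c i)) = (F (n+1)).c i
        rw [ihcrit i hi, hhct n i hi]
        -- remains: ct n i = (F (n+1)).c i
        have dich : ∀ k < d, (StrictMonoOn (F (n+1)).f (Icc (ct n k) (ct n (k+1))) ∧
              (F n).f ((F n).c k) < (F n).f ((F n).c (k+1))) ∨
            (StrictAntiOn (F (n+1)).f (Icc (ct n k) (ct n (k+1))) ∧
              (F n).f ((F n).c (k+1)) < (F n).f ((F n).c k)) := by
          intro k hk
          have hctlt : ct n k < ct n (k+1) :=
            hctmono n (Set.mem_Iic.mpr (by omega)) (Set.mem_Iic.mpr (by omega)) (by omega)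
          have hsub : Icc (ct n k) (ct n (k+1)) ⊆ Icc (0:ℝ) 1 :=
            Icc_subset_Icc (hctmem n k (by omega)).1 (hctmem n (k+1) (by omega)).2
          have e0 : g n (ct n k) ∈ Icc (0:ℝ) 1 := by
            rw [hgcv n k (by omega)]
            exact (F n).maps (hcmem n k (by omega))
          have e1 : g n (ct n (k+1)) ∈ Icc (0:ℝ) 1 := by
            rw [hgcv n (k+1) (by omega)]
            exact (F n).maps (hcmem n (k+1) (by omega))
          have hlm : ct n k ∈ Icc (ct n k) (ct n (k+1)) := left_mem_Icc.mpr hctlt.le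
          have hrm : ct n (k+1) ∈ Icc (ct n k) (ct n (k+1)) := right_mem_Icc.mpr hctlt.le
          rcases stmt7_scale_mono_or_anti (hs n) hctlt (hgslope n k hk) with ⟨mg, hlt⟩ | ⟨ag, hgt⟩
          · left
            have hgmem : ∀ z ∈ Icc (ct n k) (ct n (k+1)), g n z ∈ Icc (0:ℝ) 1 := by
              intro z hz
              exact ⟨le_trans e0.1 (mg.monotoneOn hlm hz hz.1),
                le_trans (mg.monotoneOn hz hrm hz.2) e1.2⟩
            constructor
            · intro x hx y hy hxy
              rw [hnext n x (hsub hx), hnext n y (hsub hy)]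
              exact hhm n (hgmem x hx) (hgmem y hy) (mg hx hy hxy)
            · rw [hgcv n k (by omega), hgcv n (k+1) (by omega)] at hlt
              exact hlt
          · right
            have hgmem : ∀ z ∈ Icc (ct n k) (ct n (k+1)), g n z ∈ Icc (0:ℝ) 1 := by
              intro z hz
              exact ⟨le_trans e1.1 (ag.antitoneOn hz hrm hz.2),
                le_trans (ag.antitoneOn hlm hz hz.1) e0.2⟩
            constructor
            · intro x hx y hy hxy
              rw [hnext n x (hsub hx), hnext n y (hsub hy)]
              exact hhm n (hgmem y hy) (hgmem x hx) (ag hx hy hxy)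
            · rw [hgcv n k (by omega), hgcv n (k+1) (by omega)] at hgt
              exact hgt
        have hvp' : ∀ k < d, StrictMonoOn (F (n+1)).f (Icc (ct n k) (ct n (k+1))) ∨
            StrictAntiOn (F (n+1)).f (Icc (ct n k) (ct n (k+1))) := fun k hk =>
          (dich k hk).elim (fun hh => Or.inl hh.1) (fun hh => Or.inr hh.1)
        have monoiff : ∀ k < d, (StrictMonoOn (F (n+1)).f (Icc (ct n k) (ct n (k+1))) ↔
            (F n).f ((F n).c k) < (F n).f ((F n).c (k+1))) := by
          intro k hk
          have hctlt : ct n k < ct n (k+1) :=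
            hctmono n (Set.mem_Iic.mpr (by omega)) (Set.mem_Iic.mpr (by omega)) (by omega)
          have hlm : ct n k ∈ Icc (ct n k) (ct n (k+1)) := left_mem_Icc.mpr hctlt.le
          have hrm : ct n (k+1) ∈ Icc (ct n k) (ct n (k+1)) := right_mem_Icc.mpr hctlt.le
          rcases dich k hk with ⟨m, hv⟩ | ⟨a, hv⟩
          · exact ⟨fun _ => hv, fun _ => m⟩
          · constructor
            · intro m
              have h1 := m hlm hrm hctlt
              have h2 := a hlm hrm hctlt
              linarith
            · intro hS
              linarith
        have Smono : ∀ k < d, (StrictMonoOn (F n).f (Icc ((F n).c k) ((F n).c (k+1))) ↔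
            (F n).f ((F n).c k) < (F n).f ((F n).c (k+1))) := by
          intro k hk
          have hclt : (F n).c k < (F n).c (k+1) :=
            (F n).cmono (Set.mem_Iic.mpr (by omega)) (Set.mem_Iic.mpr (by omega)) (by omega)
          have hlm : (F n).c k ∈ Icc ((F n).c k) ((F n).c (k+1)) := left_mem_Icc.mpr hclt.le
          have hrm : (F n).c (k+1) ∈ Icc ((F n).c k) ((F n).c (k+1)) := right_mem_Icc.mpr hclt.le
          constructor
          · intro m
            exact m hlm hrm hclt
          · intro hlt
            rcases (F n).piece k hk with m | a
            · exact m
            · exfalso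
              have := a hlm hrm hclt
              linarith
        have hva' : ∀ k, k + 1 < d → (StrictMonoOn (F (n+1)).f (Icc (ct n k) (ct n (k+1))) ↔
            ¬ StrictMonoOn (F (n+1)).f (Icc (ct n (k+1)) (ct n (k+2)))) := by
          intro k hk
          rw [monoiff k (by omega), monoiff (k+1) hk, ← Smono k (by omega), ← Smono (k+1) hk]
          exact (F n).alt k hk
        have huniq := stmt7_partition_unique d ((F (n+1)).f) ((F (n+1)).c) (ct n)
          (F (n+1)).cmono (hctmono n) (F (n+1)).c0 (F (n+1)).cd (hct0 n) (hctd n)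
          (F (n+1)).piece hvp' hva'
        exact (huniq i hi).symm
  -- intertwining
  have inter : ∀ n, ∀ x ∈ Icc (0:ℝ) 1, H n ((F 0).f x) = (F n).f (H n x) := by
    intro n
    induction n with
    | zero =>
      intro x _
      rw [hH0]
      rfl
    | succ n ih =>
      intro x hx
      obtain ⟨_, ihm, ih0, ih1, _⟩ := key n
      have ihmaps := mapsTo_of _ ihm ih0 ih1
      have hHx : H n x ∈ Icc (0:ℝ) 1 := ihmaps hx
      rw [hHs n]
      show h n (H n ((F 0).f x)) = (F (n+1)).f (h n (H n x))
      rw [ih x hx, hfac n (H n x) hHx, hnext n (h n (H n x)) (hmaps n hHx)]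
  -- value at the empty set
  have zeroval : ∀ n, (fun m => pullback (F 0).f d (F 0).c m)^[n] leb ∅ = 0 := by
    intro n
    induction n with
    | zero =>
      show (MeasureTheory.volume (∅ : Set ℝ)).toReal = 0
      simp
    | succ n ih =>
      rw [Function.iterate_succ_apply']
      show (∑ k ∈ Finset.range d, (fun m => pullback (F 0).f d (F 0).c m)^[n] leb
        ((F 0).f '' ((∅ : Set ℝ) ∩ Set.Icc ((F 0).c k) ((F 0).c (k+1))))) = 0
      apply Finset.sum_eq_zero
      intro k _
      rw [Set.empty_inter, Set.image_empty]
      exact ih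
  -- main induction
  have main : ∀ n, ∀ x y : ℝ, 0 ≤ x → x ≤ y → y ≤ 1 →
      (fun m => pullback (F 0).f d (F 0).c m)^[n] leb (Set.Icc x y) =
      (∏ i ∈ Finset.range n, s i) * leb (H n '' Set.Icc x y) := by
    intro n
    induction n with
    | zero =>
      intro x y hx hxy hy
      rw [hH0]
      simp
    | succ n ih =>
      intro x y hx hxy hy
      obtain ⟨Hc, Hm, H0, H1, _⟩ := key (n+1)
      have Hmaps := mapsTo_of _ Hm H0 H1
      obtain ⟨Hc', Hm', H0', H1', Hcrit'⟩ := key n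
      have Hmaps' := mapsTo_of _ Hm' H0' H1'
      have φcrit : ∀ i ≤ d, H (n+1) ((F 0).c i) = ct n i := by
        intro i hi
        rw [hHs n]
        show h n (H n ((F 0).c i)) = ct n i
        rw [Hcrit' i hi, hhct n i hi]
      have hxI : x ∈ Icc (0:ℝ) 1 := ⟨hx, by linarith⟩
      have hyI : y ∈ Icc (0:ℝ) 1 := ⟨by linarith, hy⟩
      have φmax : ∀ p q : ℝ, p ∈ Icc (0:ℝ) 1 → q ∈ Icc (0:ℝ) 1 →
          H (n+1) (max p q) = max (H (n+1) p) (H (n+1) q) := by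
        intro p q hp hq
        rcases le_total p q with hpq | hpq
        · rw [max_eq_right hpq, max_eq_right (Hm.monotoneOn hp hq hpq)]
        · rw [max_eq_left hpq, max_eq_left (Hm.monotoneOn hq hp hpq)]
      have φmin : ∀ p q : ℝ, p ∈ Icc (0:ℝ) 1 → q ∈ Icc (0:ℝ) 1 →
          H (n+1) (min p q) = min (H (n+1) p) (H (n+1) q) := by
        intro p q hp hq
        rcases le_total p q with hpq | hpq
        · rw [min_eq_left hpq, min_eq_left (Hm.monotoneOn hp hq hpq)]
        · rw [min_eq_right hpq, min_eq_right (Hm.monotoneOn hq hp hpq)]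
      rw [Function.iterate_succ_apply']
      show (∑ k ∈ Finset.range d, (fun m => pullback (F 0).f d (F 0).c m)^[n] leb
          ((F 0).f '' (Set.Icc x y ∩ Set.Icc ((F 0).c k) ((F 0).c (k+1))))) =
        (∏ i ∈ Finset.range (n+1), s i) * leb (H (n+1) '' Set.Icc x y)
      have hterm : ∀ k ∈ Finset.range d,
          (fun m => pullback (F 0).f d (F 0).c m)^[n] leb
            ((F 0).f '' (Set.Icc x y ∩ Set.Icc ((F 0).c k) ((F 0).c (k+1)))) =
          (∏ i ∈ Finset.range (n+1), s i) *
            max 0 (min (H (n+1) y) (H (n+1) ((F 0).c (k+1))) -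
              max (H (n+1) x) (H (n+1) ((F 0).c k))) := by
        intro k hk
        have hkd : k < d := Finset.mem_range.mp hk
        have hAI : (F 0).c k ∈ Icc (0:ℝ) 1 := hcmem 0 k (by omega)
        have hBI : (F 0).c (k+1) ∈ Icc (0:ℝ) 1 := hcmem 0 (k+1) (by omega)
        have hABlt : (F 0).c k < (F 0).c (k+1) :=
          (F 0).cmono (Set.mem_Iic.mpr (by omega)) (Set.mem_Iic.mpr (by omega)) (by omega)
        rw [Set.Icc_inter_Icc]
        rw [show x ⊔ (F 0).c k = max x ((F 0).c k) from rfl,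
          show y ⊓ (F 0).c (k+1) = min y ((F 0).c (k+1)) from rfl]
        set a := max x ((F 0).c k) with ha
        set b := min y ((F 0).c (k+1)) with hb
        have haI : a ∈ Icc (0:ℝ) 1 := ⟨le_trans hx (le_max_left _ _),
          max_le (by linarith) hAI.2⟩
        have hbI : b ∈ Icc (0:ℝ) 1 := ⟨le_min (by linarith) hBI.1,
          le_trans (min_le_left _ _) hy⟩
        by_cases hab : a ≤ b
        · have haAB : a ∈ Icc ((F 0).c k) ((F 0).c (k+1)) :=
            ⟨le_max_right x _, le_trans hab (min_le_right _ _)⟩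
          have hbAB : b ∈ Icc ((F 0).c k) ((F 0).c (k+1)) :=
            ⟨le_trans (le_max_right x _) hab, min_le_right _ _⟩
          have hsubI : Icc a b ⊆ Icc (0:ℝ) 1 := Icc_subset_Icc haI.1 hbI.2
          have hsubAB : Icc a b ⊆ Icc ((F 0).c k) ((F 0).c (k+1)) :=
            Icc_subset_Icc haAB.1 hbAB.2
          have haab : a ∈ Icc a b := left_mem_Icc.mpr hab
          have hbab : b ∈ Icc a b := right_mem_Icc.mpr hab
          have himg2 : H n '' ((F 0).f '' Icc a b) = g n '' (H (n+1) '' Icc a b) := by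
            rw [← Set.image_comp, ← Set.image_comp]
            apply Set.image_congr
            intro w hw
            show H n ((F 0).f w) = g n (H (n+1) w)
            rw [inter n w (hsubI hw), hfac n (H n w) (Hmaps' (hsubI hw)), hHs n]
            rfl
          have hφab : H (n+1) '' Icc a b = Icc (H (n+1) a) (H (n+1) b) :=
            stmt7_img_mono hab (Hc.mono hsubI) (Hm.mono hsubI)
          have hφle : H (n+1) a ≤ H (n+1) b := Hm.monotoneOn (hsubI haab) (hsubI hbab) hab
          have hφa_mem : H (n+1) a ∈ Icc (ct n k) (ct n (k+1)) := by
            constructor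
            · rw [← φcrit k (by omega)]
              exact Hm.monotoneOn hAI (hsubI haab) haAB.1
            · rw [← φcrit (k+1) (by omega)]
              exact Hm.monotoneOn (hsubI haab) hBI haAB.2
          have hφb_mem : H (n+1) b ∈ Icc (ct n k) (ct n (k+1)) := by
            constructor
            · rw [← φcrit k (by omega)]
              exact Hm.monotoneOn hAI (hsubI hbab) hbAB.1
            · rw [← φcrit (k+1) (by omega)]
              exact Hm.monotoneOn (hsubI hbab) hBI hbAB.2
          have hctlt : ct n k < ct n (k+1) :=
            hctmono n (Set.mem_Iic.mpr (by omega)) (Set.mem_Iic.mpr (by omega)) (by omega)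
          have hscale : leb (g n '' Icc (H (n+1) a) (H (n+1) b)) =
              s n * (H (n+1) b - H (n+1) a) :=
            stmt7_leb_scale_image (hs n) hctlt (hgslope n k hkd) hφa_mem hφb_mem hφle
          have hmaxmin : max 0 (min (H (n+1) y) (H (n+1) ((F 0).c (k+1))) -
              max (H (n+1) x) (H (n+1) ((F 0).c k))) = H (n+1) b - H (n+1) a := by
            rw [← φmin y ((F 0).c (k+1)) hyI hBI, ← φmax x ((F 0).c k) hxI hAI]
            exact max_eq_right (by linarith)
          rcases (F 0).piece k hkd with mf | af
          · have hfab : (F 0).f '' Icc a b = Icc ((F 0).f a) ((F 0).f b) :=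
              stmt7_img_mono hab ((F 0).cont.mono hsubI) (mf.mono hsubAB)
            have hfa : (F 0).f a ∈ Icc (0:ℝ) 1 := (F 0).maps haI
            have hfb : (F 0).f b ∈ Icc (0:ℝ) 1 := (F 0).maps hbI
            have hfle : (F 0).f a ≤ (F 0).f b := mf.monotoneOn haAB hbAB hab
            rw [hfab, ih _ _ hfa.1 hfle hfb.2, ← hfab, himg2, hφab, hscale,
              Finset.prod_range_succ, hmaxmin]
            ring
          · have hfab : (F 0).f '' Icc a b = Icc ((F 0).f b) ((F 0).f a) :=
              stmt7_img_anti hab ((F 0).cont.mono hsubI) (af.mono hsubAB)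
            have hfa : (F 0).f a ∈ Icc (0:ℝ) 1 := (F 0).maps haI
            have hfb : (F 0).f b ∈ Icc (0:ℝ) 1 := (F 0).maps hbI
            have hfle : (F 0).f b ≤ (F 0).f a := af.antitoneOn haAB hbAB hab
            rw [hfab, ih _ _ hfb.1 hfle hfa.2, ← hfab, himg2, hφab, hscale,
              Finset.prod_range_succ, hmaxmin]
            ring
        · push_neg at hab
          rw [Set.Icc_eq_empty (not_le.mpr hab), Set.image_empty, zeroval n]
          have hneg : min (H (n+1) y) (H (n+1) ((F 0).c (k+1))) -
              max (H (n+1) x) (H (n+1) ((F 0).c k)) < 0 := by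
            rw [← φmin y ((F 0).c (k+1)) hyI hBI, ← φmax x ((F 0).c k) hxI hAI]
            have := Hm hbI haI hab
            linarith
          rw [max_eq_left (by linarith), mul_zero]
      rw [Finset.sum_congr rfl hterm, ← Finset.mul_sum]
      have hp : ∀ i j, i ≤ j → j ≤ d → H (n+1) ((F 0).c i) ≤ H (n+1) ((F 0).c j) := by
        intro i j hij hj
        exact Hm.monotoneOn (hcmem 0 i (by omega)) (hcmem 0 j hj)
          ((F 0).cmono.monotoneOn (Set.mem_Iic.mpr (by omega)) (Set.mem_Iic.mpr hj) hij)
      have h1 : H (n+1) ((F 0).c 0) ≤ H (n+1) x := by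
        rw [(F 0).c0, H0]
        exact (Hmaps hxI).1
      have h2 : H (n+1) x ≤ H (n+1) y := Hm.monotoneOn hxI hyI hxy
      have h3 : H (n+1) y ≤ H (n+1) ((F 0).c d) := by
        rw [(F 0).cd, H1]
        exact (Hmaps hyI).2
      have hclamp : ∑ k ∈ Finset.range d, max 0 (min (H (n+1) y) (H (n+1) ((F 0).c (k+1))) -
          max (H (n+1) x) (H (n+1) ((F 0).c k))) = H (n+1) y - H (n+1) x :=
        stmt7_sum_clamp d (fun k => H (n+1) ((F 0).c k)) hp (H (n+1) x) (H (n+1) y) h1 h2 h3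
      rw [hclamp]
      have himgxy : H (n+1) '' Set.Icc x y = Icc (H (n+1) x) (H (n+1) y) :=
        stmt7_img_mono hxy (Hc.mono (Icc_subset_Icc hx hy)) (Hm.mono (Icc_subset_Icc hx hy))
      rw [himgxy, stmt7_leb_Icc h2]
  intro n _ x y hx hxy hy
  exact main n x y hx hxy hy
end

section
/- For a piecewise monotone map f, the total variation of f^n over a subinterval J equals the L¹-norm (with respect to Lebesgue measure) of L^n χ_J: Var_J(f^n) = ‖L^n χ_J‖_{L¹}. -/
open Set

/-- The transfer operator with constant potential 1. -/
noncomputable def transferOp (f : ℝ → ℝ) (d : ℕ) (c : ℕ → ℝ) (finv : ℕ → ℝ → ℝ)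
    (φ : ℝ → ℝ) : ℝ → ℝ :=
  fun x => ∑ k ∈ Finset.range d,
    φ (finv k x) * (f '' Set.Icc (c k) (c (k + 1))).indicator (fun _ => (1 : ℝ)) x

open MeasureTheory

section Aux

variable (f : ℝ → ℝ) (d : ℕ) (c : ℕ → ℝ) (finv : ℕ → ℝ → ℝ)

private lemma tsum_step {ι : Type*} (s : Finset ι) (g : ι → ℝ → ℝ) :
    transferOp f d c finv (fun x => ∑ k ∈ s, g k x) =
      fun x => ∑ k ∈ s, transferOp f d c finv (g k) x := by
  funext x
  simp only [transferOp, Finset.sum_mul]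
  exact Finset.sum_comm

private lemma tsum_iter (n : ℕ) {ι : Type*} (s : Finset ι) (g : ι → ℝ → ℝ) :
    (transferOp f d c finv)^[n] (fun x => ∑ k ∈ s, g k x) =
      fun x => ∑ k ∈ s, (transferOp f d c finv)^[n] (g k) x := by
  induction n generalizing g with
  | zero => simp
  | succ n ih =>
    rw [Function.iterate_succ_apply, tsum_step,
      ih (fun k => transferOp f d c finv (g k))]
    funext x
    simp [Function.iterate_succ_apply]

private lemma t_zero : transferOp f d c finv (fun _ => (0 : ℝ)) = fun _ => (0 : ℝ) := by
  funext x; simp [transferOp]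

private lemma t_iter_zero (n : ℕ) :
    (transferOp f d c finv)^[n] (fun _ => (0 : ℝ)) = fun _ => (0 : ℝ) := by
  induction n with
  | zero => simp
  | succ n ih => rw [Function.iterate_succ_apply, t_zero, ih]

private lemma t_iter_nonneg (n : ℕ) (φ : ℝ → ℝ) (hφ : ∀ x, 0 ≤ φ x) :
    ∀ x, 0 ≤ (transferOp f d c finv)^[n] φ x := by
  induction n generalizing φ with
  | zero => simpa using hφ
  | succ n ih =>
    rw [Function.iterate_succ_apply]
    refine ih _ fun x => ?_
    refine Finset.sum_nonneg fun k _ => mul_nonneg (hφ _) ?_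
    exact Set.indicator_nonneg (fun _ _ => zero_le_one) _

private lemma t_indicator
    (hinv : ∀ k < d, ∀ x ∈ Set.Icc (c k) (c (k + 1)), finv k (f x) = x)
    (hinv' : ∀ k < d, ∀ y ∈ f '' Set.Icc (c k) (c (k + 1)),
      finv k y ∈ Set.Icc (c k) (c (k + 1)) ∧ f (finv k y) = y)
    (J : Set ℝ) :
    transferOp f d c finv (J.indicator fun _ => (1 : ℝ)) =
      fun z => ∑ k ∈ Finset.range d,
        (f '' (J ∩ Set.Icc (c k) (c (k + 1)))).indicator (fun _ => (1 : ℝ)) z := by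
  funext z
  unfold transferOp
  refine Finset.sum_congr rfl fun k hk => ?_
  rw [Finset.mem_range] at hk
  by_cases hz : z ∈ f '' Set.Icc (c k) (c (k + 1))
  · rw [Set.indicator_of_mem hz]
    obtain ⟨hmem, hfz⟩ := hinv' k hk z hz
    by_cases hJ : finv k z ∈ J
    · rw [Set.indicator_of_mem hJ, Set.indicator_of_mem (show z ∈ f '' (J ∩ Set.Icc (c k) (c (k + 1))) from ⟨finv k z, ⟨hJ, hmem⟩, hfz⟩)]
      ring
    · rw [Set.indicator_of_notMem hJ, Set.indicator_of_notMem]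
      · ring
      · rintro ⟨w, ⟨hwJ, hwI⟩, rfl⟩
        exact hJ (by rw [hinv k hk w hwI]; exact hwJ)
  · rw [Set.indicator_of_notMem hz, mul_zero, Set.indicator_of_notMem]
    rintro ⟨w, ⟨_, hwI⟩, rfl⟩
    exact hz ⟨w, hwI, rfl⟩

end Aux

private lemma chain_le (u : ℕ → ℝ) (m : ℕ) (h : ∀ k < m, u k ≤ u (k + 1)) :
    ∀ i ≤ m, u 0 ≤ u i := by
  intro i
  induction i with
  | zero => intro _; exact le_rfl
  | succ i ih =>
    intro hi
    exact (ih (Nat.le_of_succ_le hi)).trans (h i (by omega))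

private lemma var_partition (g : ℝ → ℝ) (u : ℕ → ℝ) (m : ℕ)
    (h : ∀ k < m, u k ≤ u (k + 1)) :
    ∑ k ∈ Finset.range m, eVariationOn g (Set.Icc (u k) (u (k + 1))) =
      eVariationOn g (Set.Icc (u 0) (u m)) := by
  induction m with
  | zero =>
    rw [Finset.range_zero, Finset.sum_empty, Set.Icc_self]
    exact (eVariationOn.subsingleton g Set.subsingleton_singleton).symm
  | succ m ih =>
    have h0m : u 0 ≤ u m := chain_le u (m + 1) h m (by omega)
    have hmm : u m ≤ u (m + 1) := h m (by omega)
    have key := eVariationOn.Icc_add_Icc g (s := Set.univ) h0m hmm (Set.mem_univ _)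
    simp only [Set.univ_inter] at key
    rw [Finset.sum_range_succ, ih (fun k hk => h k (by omega)), key]

private lemma image_mono_Icc {f : ℝ → ℝ} {A B : ℝ} (hAB : A ≤ B)
    (hc : ContinuousOn f (Set.Icc A B)) (hm : MonotoneOn f (Set.Icc A B)) :
    f '' Set.Icc A B = Set.Icc (f A) (f B) := by
  refine Set.Subset.antisymm ?_ (intermediate_value_Icc hAB hc)
  rintro _ ⟨w, hw, rfl⟩
  exact ⟨hm (Set.left_mem_Icc.2 hAB) hw hw.1, hm hw (Set.right_mem_Icc.2 hAB) hw.2⟩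

private lemma image_anti_Icc {f : ℝ → ℝ} {A B : ℝ} (hAB : A ≤ B)
    (hc : ContinuousOn f (Set.Icc A B)) (hm : AntitoneOn f (Set.Icc A B)) :
    f '' Set.Icc A B = Set.Icc (f B) (f A) := by
  refine Set.Subset.antisymm ?_ (intermediate_value_Icc' hAB hc)
  rintro _ ⟨w, hw, rfl⟩
  exact ⟨hm hw (Set.right_mem_Icc.2 hAB) hw.2, hm (Set.left_mem_Icc.2 hAB) hw hw.1⟩

private lemma main_ind (d : ℕ) (F : PwMono d) (finv : ℕ → ℝ → ℝ)
    (hinv : ∀ k < d, ∀ x ∈ Set.Icc (F.c k) (F.c (k + 1)), finv k (F.f x) = x)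
    (hinv' : ∀ k < d, ∀ y ∈ F.f '' Set.Icc (F.c k) (F.c (k + 1)),
      finv k y ∈ Set.Icc (F.c k) (F.c (k + 1)) ∧ F.f (finv k y) = y) :
    ∀ n : ℕ, ∀ a b : ℝ, 0 ≤ a → a ≤ b → b ≤ 1 →
      MeasureTheory.IntegrableOn
        ((transferOp F.f d F.c finv)^[n] ((Set.Icc a b).indicator fun _ => (1 : ℝ)))
        (Set.Icc 0 1) MeasureTheory.volume ∧
      eVariationOn (F.f^[n]) (Set.Icc a b) =
        ENNReal.ofReal (∫ z in Set.Icc (0 : ℝ) 1,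
          (transferOp F.f d F.c finv)^[n] ((Set.Icc a b).indicator fun _ => (1 : ℝ)) z) := by
  intro n
  induction n with
  | zero =>
    intro a b ha hab hb1
    simp only [Function.iterate_zero_apply, Function.iterate_zero]
    have hsub : Set.Icc a b ⊆ Set.Icc (0 : ℝ) 1 := Set.Icc_subset_Icc ha hb1
    have hIcc : Set.Icc (0 : ℝ) 1 ∩ Set.Icc a b = Set.Icc a b :=
      Set.inter_eq_self_of_subset_right hsub
    have hint : MeasureTheory.IntegrableOn
        ((Set.Icc a b).indicator fun _ => (1 : ℝ)) (Set.Icc 0 1) MeasureTheory.volume := by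
      refine MeasureTheory.Integrable.indicator ?_ measurableSet_Icc
      refine MeasureTheory.integrableOn_const ?_ (by simp)
      simp [Real.volume_Icc]
    refine ⟨hint, ?_⟩
    have hI : (∫ z in Set.Icc (0 : ℝ) 1,
        (Set.Icc a b).indicator (fun _ => (1 : ℝ)) z) = b - a := by
      rw [MeasureTheory.setIntegral_indicator measurableSet_Icc, hIcc,
        MeasureTheory.setIntegral_const, Real.volume_real_Icc_of_le hab, smul_eq_mul, mul_one]
    rw [hI]
    refine le_antisymm ?_ ?_
    · have h := (monotone_id.monotoneOn (Set.Icc a b)).eVariationOn_le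
        (Set.left_mem_Icc.2 hab) (Set.right_mem_Icc.2 hab)
      simpa [Set.inter_self] using h
    · have h := eVariationOn.edist_le (id : ℝ → ℝ)
        (Set.left_mem_Icc.2 hab) (Set.right_mem_Icc.2 hab)
      have he : edist (a : ℝ) b = ENNReal.ofReal (b - a) := by
        rw [edist_dist, Real.dist_eq, abs_sub_comm, abs_of_nonneg (sub_nonneg.2 hab)]
      calc ENNReal.ofReal (b - a) = edist (id a) (id b) := by simpa [id] using he.symm
        _ ≤ eVariationOn (id : ℝ → ℝ) (Set.Icc a b) := h
  | succ n ih =>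
    intro a b ha hab hb1
    have hcle : ∀ k < d, F.c k ≤ F.c (k + 1) := fun k hk =>
      (F.cmono (Set.mem_Iic.2 (by omega)) (Set.mem_Iic.2 (by omega)) (by omega)).le
    set u : ℕ → ℝ := fun k => min (max a (F.c k)) b with hu
    have hchain : ∀ k < d, u k ≤ u (k + 1) := fun k hk =>
      min_le_min (max_le_max le_rfl (hcle k hk)) le_rfl
    have hu0 : u 0 = a := by
      simp only [hu, F.c0, max_eq_left ha, min_eq_left hab]
    have hud : u d = b := by
      have ha1 : a ≤ 1 := hab.trans hb1
      simp only [hu, F.cd, max_eq_right ha1, min_eq_right hb1]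
    have key : ∀ k < d,
        MeasureTheory.IntegrableOn
          ((transferOp F.f d F.c finv)^[n]
            ((F.f '' (Set.Icc a b ∩ Set.Icc (F.c k) (F.c (k + 1)))).indicator
              fun _ => (1 : ℝ))) (Set.Icc 0 1) MeasureTheory.volume ∧
        eVariationOn (F.f^[n + 1]) (Set.Icc (u k) (u (k + 1))) =
          ENNReal.ofReal (∫ z in Set.Icc (0 : ℝ) 1,
            (transferOp F.f d F.c finv)^[n]
              ((F.f '' (Set.Icc a b ∩ Set.Icc (F.c k) (F.c (k + 1)))).indicator
                fun _ => (1 : ℝ)) z) := by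
      intro k hk
      have hicc : Set.Icc a b ∩ Set.Icc (F.c k) (F.c (k + 1)) =
          Set.Icc (max a (F.c k)) (min b (F.c (k + 1))) := Set.Icc_inter_Icc
      set A := max a (F.c k) with hA
      set B := min b (F.c (k + 1)) with hB
      by_cases hAB : A ≤ B
      · have hBb : B ≤ b := min_le_left _ _
        have hukA : u k = A := min_eq_left (hAB.trans hBb)
        have huk1B : u (k + 1) = B := by
          have haB : a ≤ F.c (k + 1) :=
            le_trans (le_trans (le_max_left _ _) hAB) (min_le_right _ _)
          show min (max a (F.c (k + 1))) b = B
          rw [max_eq_right haB, min_comm]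
        have hA0 : (0 : ℝ) ≤ A := le_trans ha (le_max_left _ _)
        have hB1 : B ≤ 1 := hBb.trans hb1
        have hsub : Set.Icc A B ⊆ Set.Icc (F.c k) (F.c (k + 1)) :=
          Set.Icc_subset_Icc (le_max_right _ _) (min_le_right _ _)
        have hsub01 : Set.Icc A B ⊆ Set.Icc (0 : ℝ) 1 :=
          Set.Icc_subset_Icc hA0 hB1
        have hcont : ContinuousOn F.f (Set.Icc A B) := F.cont.mono hsub01
        have hAmem : A ∈ Set.Icc (0 : ℝ) 1 := ⟨hA0, hAB.trans hB1⟩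
        have hBmem : B ∈ Set.Icc (0 : ℝ) 1 := ⟨hA0.trans hAB, hB1⟩
        have hfA := F.maps hAmem
        have hfB := F.maps hBmem
        have hAI : A ∈ Set.Icc (F.c k) (F.c (k + 1)) := hsub (Set.left_mem_Icc.2 hAB)
        have hBI : B ∈ Set.Icc (F.c k) (F.c (k + 1)) := hsub (Set.right_mem_Icc.2 hAB)
        rcases F.piece k hk with hmono | hanti
        · have hmOn : MonotoneOn F.f (Set.Icc A B) := (hmono.monotoneOn).mono hsub
          have him : F.f '' Set.Icc A B = Set.Icc (F.f A) (F.f B) :=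
            image_mono_Icc hAB hcont hmOn
          have hord : F.f A ≤ F.f B := hmono.monotoneOn hAI hBI hAB
          obtain ⟨ihint, ihvar⟩ := ih (F.f A) (F.f B) hfA.1 hord hfB.2
          constructor
          · rw [hicc, him]; exact ihint
          · rw [hukA, huk1B, hicc, him, Function.iterate_succ,
              eVariationOn.comp_eq_of_monotoneOn (F.f^[n]) F.f hmOn, him]
            exact ihvar
        · have hmOn : AntitoneOn F.f (Set.Icc A B) := (hanti.antitoneOn).mono hsub
          have him : F.f '' Set.Icc A B = Set.Icc (F.f B) (F.f A) :=
            image_anti_Icc hAB hcont hmOn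
          have hord : F.f B ≤ F.f A := hanti.antitoneOn hAI hBI hAB
          obtain ⟨ihint, ihvar⟩ := ih (F.f B) (F.f A) hfB.1 hord hfA.2
          constructor
          · rw [hicc, him]; exact ihint
          · rw [hukA, huk1B, hicc, him, Function.iterate_succ,
              eVariationOn.comp_eq_of_antitoneOn (F.f^[n]) F.f hmOn, him]
            exact ihvar
      · push_neg at hAB
        have hempty : Set.Icc a b ∩ Set.Icc (F.c k) (F.c (k + 1)) = ∅ := by
          rw [hicc]; exact Set.Icc_eq_empty (not_le.2 hAB)
        have hzero : (F.f '' (Set.Icc a b ∩ Set.Icc (F.c k) (F.c (k + 1)))).indicator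
            (fun _ => (1 : ℝ)) = fun _ => (0 : ℝ) := by
          funext z; simp [hempty]
        have huu : u k = u (k + 1) := by
          rcases lt_or_ge b (F.c k) with h | h
          · have h2 : b < F.c (k + 1) := h.trans_le (hcle k hk)
            show min (max a (F.c k)) b = min (max a (F.c (k + 1))) b
            rw [min_eq_right (le_max_of_le_right h.le),
              min_eq_right (le_max_of_le_right h2.le)]
          · have h2 : F.c (k + 1) < a := by
              by_contra hcon
              push_neg at hcon
              exact absurd (max_le (le_min hab hcon) (le_min h (hcle k hk)))
                (not_le.2 hAB)
            show min (max a (F.c k)) b = min (max a (F.c (k + 1))) b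
            rw [max_eq_left ((hcle k hk).trans h2.le), max_eq_left h2.le]
        constructor
        · rw [hzero, t_iter_zero]
          exact MeasureTheory.integrableOn_zero
        · rw [huu, Set.Icc_self,
            eVariationOn.subsingleton (F.f^[n + 1]) Set.subsingleton_singleton,
            hzero, t_iter_zero]
          simp
    have hfunrw : (transferOp F.f d F.c finv)^[n + 1]
        ((Set.Icc a b).indicator fun _ => (1 : ℝ)) =
        fun z => ∑ k ∈ Finset.range d,
          (transferOp F.f d F.c finv)^[n]
            ((F.f '' (Set.Icc a b ∩ Set.Icc (F.c k) (F.c (k + 1)))).indicator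
              fun _ => (1 : ℝ)) z := by
      rw [Function.iterate_succ_apply,
        t_indicator F.f d F.c finv hinv hinv' (Set.Icc a b),
        tsum_iter]
    have hint : ∀ k ∈ Finset.range d,
        MeasureTheory.IntegrableOn
          ((transferOp F.f d F.c finv)^[n]
            ((F.f '' (Set.Icc a b ∩ Set.Icc (F.c k) (F.c (k + 1)))).indicator
              fun _ => (1 : ℝ))) (Set.Icc 0 1) MeasureTheory.volume :=
      fun k hk => (key k (Finset.mem_range.1 hk)).1
    have hintegrable : MeasureTheory.IntegrableOn
        ((transferOp F.f d F.c finv)^[n + 1]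
          ((Set.Icc a b).indicator fun _ => (1 : ℝ)))
        (Set.Icc 0 1) MeasureTheory.volume := by
      rw [hfunrw]
      exact MeasureTheory.integrable_finset_sum _ hint
    refine ⟨hintegrable, ?_⟩
    have hnonneg : ∀ k ∈ Finset.range d,
        0 ≤ ∫ z in Set.Icc (0 : ℝ) 1,
          (transferOp F.f d F.c finv)^[n]
            ((F.f '' (Set.Icc a b ∩ Set.Icc (F.c k) (F.c (k + 1)))).indicator
              fun _ => (1 : ℝ)) z := by
      intro k _
      refine MeasureTheory.setIntegral_nonneg measurableSet_Icc fun z _ => ?_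
      exact t_iter_nonneg F.f d F.c finv n _
        (Set.indicator_nonneg fun _ _ => zero_le_one) z
    calc eVariationOn (F.f^[n + 1]) (Set.Icc a b)
        = eVariationOn (F.f^[n + 1]) (Set.Icc (u 0) (u d)) := by rw [hu0, hud]
      _ = ∑ k ∈ Finset.range d, eVariationOn (F.f^[n + 1]) (Set.Icc (u k) (u (k + 1))) :=
          (var_partition (F.f^[n + 1]) u d hchain).symm
      _ = ∑ k ∈ Finset.range d, ENNReal.ofReal (∫ z in Set.Icc (0 : ℝ) 1,
            (transferOp F.f d F.c finv)^[n]
              ((F.f '' (Set.Icc a b ∩ Set.Icc (F.c k) (F.c (k + 1)))).indicator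
                fun _ => (1 : ℝ)) z) :=
          Finset.sum_congr rfl fun k hk => (key k (Finset.mem_range.1 hk)).2
      _ = ENNReal.ofReal (∑ k ∈ Finset.range d, ∫ z in Set.Icc (0 : ℝ) 1,
            (transferOp F.f d F.c finv)^[n]
              ((F.f '' (Set.Icc a b ∩ Set.Icc (F.c k) (F.c (k + 1)))).indicator
                fun _ => (1 : ℝ)) z) :=
          (ENNReal.ofReal_sum_of_nonneg hnonneg).symm
      _ = ENNReal.ofReal (∫ z in Set.Icc (0 : ℝ) 1, ∑ k ∈ Finset.range d,
            (transferOp F.f d F.c finv)^[n]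
              ((F.f '' (Set.Icc a b ∩ Set.Icc (F.c k) (F.c (k + 1)))).indicator
                fun _ => (1 : ℝ)) z) := by
          rw [MeasureTheory.integral_finset_sum _ hint]
      _ = ENNReal.ofReal (∫ z in Set.Icc (0 : ℝ) 1,
            (transferOp F.f d F.c finv)^[n + 1]
              ((Set.Icc a b).indicator fun _ => (1 : ℝ)) z) := by
          simp only [hfunrw]

/-- `Var_J(fⁿ) = ‖Lⁿ χ_J‖_{L¹}` with respect to Lebesgue measure. -/
theorem stmt_10 (d : ℕ) (F : PwMono d) (finv : ℕ → ℝ → ℝ)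
    (hinv : ∀ k < d, ∀ x ∈ Set.Icc (F.c k) (F.c (k + 1)), finv k (F.f x) = x)
    (hinv' : ∀ k < d, ∀ y ∈ F.f '' Set.Icc (F.c k) (F.c (k + 1)),
      finv k y ∈ Set.Icc (F.c k) (F.c (k + 1)) ∧ F.f (finv k y) = y)
    (x y : ℝ) (hx : 0 ≤ x) (hxy : x ≤ y) (hy : y ≤ 1) (n : ℕ) :
    (eVariationOn (F.f^[n]) (Set.Icc x y)).toReal =
      ∫ z in Set.Icc (0 : ℝ) 1,
        |(transferOp F.f d F.c finv)^[n] ((Set.Icc x y).indicator fun _ => (1 : ℝ)) z| := by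
  obtain ⟨hint, hvar⟩ := main_ind d F finv hinv hinv' n x y hx hxy hy
  have hnn : ∀ z, 0 ≤ (transferOp F.f d F.c finv)^[n]
      ((Set.Icc x y).indicator fun _ => (1 : ℝ)) z :=
    t_iter_nonneg F.f d F.c finv n _ (Set.indicator_nonneg fun _ _ => zero_le_one)
  rw [hvar, ENNReal.toReal_ofReal
    (MeasureTheory.setIntegral_nonneg measurableSet_Icc fun z _ => hnn z)]
  exact MeasureTheory.integral_congr_ae
    (MeasureTheory.ae_of_all _ fun z => (abs_of_nonneg (hnn z)).symm)
end

section
/- Any eigenvector φ of the transfer operator L with eigenvalue ξ of modulus |ξ| > 1 vanishes identically on I ∖ K_f, the complement of the core of f. -/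
open Set

/-- The transfer operator with constant potential 1 acting on complex-valued functions. -/
noncomputable def transferOpC (f : ℝ → ℝ) (d : ℕ) (c : ℕ → ℝ) (finv : ℕ → ℝ → ℝ)
    (φ : ℝ → ℂ) : ℝ → ℂ :=
  fun x => ∑ k ∈ Finset.range d,
    φ (finv k x) * ((f '' Set.Icc (c k) (c (k + 1))).indicator (fun _ => (1 : ℝ)) x : ℝ)

/-- The postcritical set of a piecewise monotone map: the closure of the union of the
forward orbits of the interior turning points. -/
def postcritical (d : ℕ) (F : PwMono d) : Set ℝ :=
  closure (⋃ i ∈ Set.Ioo 0 d, ⋃ n ∈ Set.Ici 1, {F.f^[n] (F.c i)})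

/-- The core: the convex hull of the postcritical set. -/
noncomputable def core (d : ℕ) (F : PwMono d) : Set ℝ :=
  Set.Icc (sInf (postcritical d F)) (sSup (postcritical d F))

private lemma sup_trick {T : Set ℝ} {φ : ℝ → ℂ} {ξ : ℂ} {C : ℝ} (hξ : 1 < ‖ξ‖)
    (hC : ∀ y ∈ T, ‖φ y‖ ≤ C)
    (hstep : ∀ y ∈ T, ‖ξ * φ y‖ ≤ sSup ((fun z => ‖φ z‖) '' T)) :
    ∀ y ∈ T, φ y = 0 := by
  intro y hy
  set M := sSup ((fun z => ‖φ z‖) '' T) with hMdef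
  have hbdd : BddAbove ((fun z => ‖φ z‖) '' T) := by
    refine ⟨C, ?_⟩
    rintro _ ⟨z, hz, rfl⟩
    exact hC z hz
  have hmem : ∀ z ∈ T, ‖φ z‖ ≤ M := fun z hz => le_csSup hbdd (Set.mem_image_of_mem _ hz)
  have hξ0 : (0:ℝ) < ‖ξ‖ := lt_trans one_pos hξ
  have hne : ((fun z => ‖φ z‖) '' T).Nonempty := ⟨_, Set.mem_image_of_mem _ hy⟩
  have hMle : M ≤ M / ‖ξ‖ := by
    apply csSup_le hne
    rintro _ ⟨z, hz, rfl⟩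
    have h1 := hstep z hz
    rw [norm_mul] at h1
    rw [le_div_iff₀ hξ0]
    calc ‖φ z‖ * ‖ξ‖ = ‖ξ‖ * ‖φ z‖ := mul_comm _ _
      _ ≤ M := h1
  have hM0 : 0 ≤ M := le_trans (norm_nonneg _) (hmem y hy)
  have hMneg : M ≤ 0 := by
    by_contra h
    push_neg at h
    have : M / ‖ξ‖ < M := div_lt_self h hξ
    linarith
  exact norm_le_zero_iff.mp ((hmem y hy).trans hMneg)

/-- any bounded eigenvector of the transfer operator with eigenvalue of
modulus `> 1` vanishes on `I ∖ K_f`. -/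
theorem stmt_11 (d : ℕ) (F : PwMono d) (finv : ℕ → ℝ → ℝ)
    (hinv : ∀ k < d, ∀ x ∈ Set.Icc (F.c k) (F.c (k + 1)), finv k (F.f x) = x)
    (hinv' : ∀ k < d, ∀ y ∈ F.f '' Set.Icc (F.c k) (F.c (k + 1)),
      finv k y ∈ Set.Icc (F.c k) (F.c (k + 1)) ∧ F.f (finv k y) = y)
    (φ : ℝ → ℂ) (C : ℝ) (hbdd : ∀ x ∈ Set.Icc (0 : ℝ) 1, ‖φ x‖ ≤ C)
    (ξ : ℂ) (hξ : 1 < ‖ξ‖)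
    (heig : ∀ x ∈ Set.Icc (0 : ℝ) 1, transferOpC F.f d F.c finv φ x = ξ * φ x) :
    ∀ x ∈ Set.Icc (0 : ℝ) 1 \ core d F, φ x = 0 := by
  classical
  intro x hx
  have hξ0 : ξ ≠ 0 := by
    intro h; rw [h, norm_zero] at hξ; linarith
  have hcle : ∀ j k : ℕ, j ≤ k → k ≤ d → F.c j ≤ F.c k := by
    intro j k hjk hkd
    exact F.cmono.monotoneOn (Set.mem_Iic.mpr (hjk.trans hkd)) (Set.mem_Iic.mpr hkd) hjk
  have hIsub : ∀ k, k < d → Set.Icc (F.c k) (F.c (k+1)) ⊆ Set.Icc (0:ℝ) 1 := by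
    intro k hk z hz
    constructor
    · calc (0:ℝ) = F.c 0 := F.c0.symm
        _ ≤ F.c k := hcle 0 k (Nat.zero_le _) (le_of_lt hk)
        _ ≤ z := hz.1
    · calc z ≤ F.c (k+1) := hz.2
        _ ≤ F.c d := hcle (k+1) d hk (le_refl d)
        _ = 1 := F.cd
  have hTexp : ∀ y, transferOpC F.f d F.c finv φ y
      = ∑ k ∈ Finset.range d,
          φ (finv k y) * ((F.f '' Set.Icc (F.c k) (F.c (k + 1))).indicator (fun _ => (1 : ℝ)) y : ℝ) :=
    fun _ => rfl
  have htermz : ∀ (y : ℝ) (k : ℕ), y ∉ F.f '' Set.Icc (F.c k) (F.c (k + 1)) →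
      φ (finv k y) * ((F.f '' Set.Icc (F.c k) (F.c (k + 1))).indicator (fun _ => (1 : ℝ)) y : ℝ) = 0 := by
    intro y k h
    rw [Set.indicator_of_notMem h]
    norm_num
  have htermo : ∀ (y : ℝ) (k : ℕ), y ∈ F.f '' Set.Icc (F.c k) (F.c (k + 1)) →
      φ (finv k y) * ((F.f '' Set.Icc (F.c k) (F.c (k + 1))).indicator (fun _ => (1 : ℝ)) y : ℝ)
        = φ (finv k y) := by
    intro y k h
    rw [Set.indicator_of_mem h]
    norm_num
  have hd : d = 1 ∨ 2 ≤ d := by have := F.pos; omega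
  rcases hd with hd1 | hd2
  · -- degree one: f is a homeomorphism of [0,1]
    subst hd1
    have hc01 : F.c 0 ≤ F.c 1 := hcle 0 1 (by omega) (le_refl 1)
    have hcont' : ContinuousOn F.f (Set.Icc (F.c 0) (F.c 1)) := by
      rw [F.c0, F.cd]; exact F.cont
    have hmem0 : (0:ℝ) ∈ Set.Icc (F.c 0) (F.c 1) := by
      rw [F.c0, F.cd]; exact ⟨le_refl _, zero_le_one⟩
    have hmem1 : (1:ℝ) ∈ Set.Icc (F.c 0) (F.c 1) := by
      rw [F.c0, F.cd]; exact ⟨zero_le_one, le_refl _⟩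
    have hsurj : ∀ y ∈ Set.Icc (0:ℝ) 1, y ∈ F.f '' Set.Icc (F.c 0) (F.c 1) := by
      intro y hy
      rcases F.bdry0 with h0 | h0 <;> rcases F.bdry1 with h1 | h1
      · exfalso
        rcases F.piece 0 (by omega) with hm | hm
        · have := hm hmem0 hmem1 zero_lt_one
          rw [h0, h1] at this; linarith
        · have := hm hmem0 hmem1 zero_lt_one
          rw [h0, h1] at this; linarith
      · apply intermediate_value_Icc hc01 hcont'
        rw [F.c0, F.cd, h0, h1]
        exact hy
      · apply intermediate_value_Icc' hc01 hcont'
        rw [F.c0, F.cd, h0, h1]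
        exact hy
      · exfalso
        rcases F.piece 0 (by omega) with hm | hm
        · have := hm hmem0 hmem1 zero_lt_one
          rw [h0, h1] at this; linarith
        · have := hm hmem0 hmem1 zero_lt_one
          rw [h0, h1] at this; linarith
    refine sup_trick hξ (fun y hy => hbdd y hy) ?_ x hx.1
    intro y hy
    have hBA : BddAbove ((fun z => ‖φ z‖) '' Set.Icc (0:ℝ) 1) := by
      refine ⟨C, ?_⟩
      rintro _ ⟨z, hz, rfl⟩
      exact hbdd z hz
    have hmemJ : y ∈ F.f '' Set.Icc (F.c 0) (F.c (0+1)) := hsurj y hy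
    have heq : ξ * φ y = φ (finv 0 y) := by
      rw [← heig y hy, hTexp y, Finset.sum_range_one, htermo y 0 hmemJ]
    rw [heq]
    obtain ⟨hzI, -⟩ := hinv' 0 (by omega) y hmemJ
    exact le_csSup hBA (Set.mem_image_of_mem _ (hIsub 0 (by omega) hzI))
  · -- degree at least two
    have hPdef : postcritical d F
        = closure (⋃ i ∈ Set.Ioo 0 d, ⋃ n ∈ Set.Ici 1, {F.f^[n] (F.c i)}) := rfl
    set a := sInf (postcritical d F) with hadef
    set b := sSup (postcritical d F) with hbdef
    have hcore : core d F = Set.Icc a b := rfl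
    have hUsub : (⋃ i ∈ Set.Ioo 0 d, ⋃ n ∈ Set.Ici 1, {F.f^[n] (F.c i)}) ⊆ Set.Icc (0:ℝ) 1 := by
      intro z hz
      simp only [Set.mem_iUnion, Set.mem_singleton_iff, exists_prop] at hz
      obtain ⟨i, hi, n, hn, rfl⟩ := hz
      refine Set.MapsTo.iterate F.maps n ?_
      rw [Set.mem_Ioo] at hi
      constructor
      · rw [← F.c0]; exact hcle 0 i (Nat.zero_le _) (le_of_lt hi.2)
      · rw [← F.cd]; exact hcle i d (le_of_lt hi.2) (le_refl d)
    have hUf : ∀ z ∈ (⋃ i ∈ Set.Ioo 0 d, ⋃ n ∈ Set.Ici 1, {F.f^[n] (F.c i)}),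
        F.f z ∈ (⋃ i ∈ Set.Ioo 0 d, ⋃ n ∈ Set.Ici 1, {F.f^[n] (F.c i)}) := by
      intro z hz
      simp only [Set.mem_iUnion, Set.mem_singleton_iff, exists_prop] at hz ⊢
      obtain ⟨i, hi, n, hn, rfl⟩ := hz
      exact ⟨i, hi, n+1, Set.mem_Ici.mpr (by omega),
        (Function.iterate_succ_apply' F.f n (F.c i)).symm⟩
    have hPsub : postcritical d F ⊆ Set.Icc (0:ℝ) 1 := by
      rw [hPdef]; exact closure_minimal hUsub isClosed_Icc
    have hPne : (postcritical d F).Nonempty := by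
      refine ⟨F.f^[1] (F.c 1), ?_⟩
      rw [hPdef]
      apply subset_closure
      simp only [Set.mem_iUnion, Set.mem_singleton_iff, exists_prop]
      exact ⟨1, Set.mem_Ioo.mpr ⟨by omega, by omega⟩, 1, Set.mem_Ici.mpr (le_refl 1), rfl⟩
    have hPbb : BddBelow (postcritical d F) := ⟨0, fun p hp => (hPsub hp).1⟩
    have hPba : BddAbove (postcritical d F) := ⟨1, fun p hp => (hPsub hp).2⟩
    have hPcl : IsClosed (postcritical d F) := by rw [hPdef]; exact isClosed_closure
    have haP : a ∈ postcritical d F := hPcl.csInf_mem hPne hPbb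
    have hbP : b ∈ postcritical d F := hPcl.csSup_mem hPne hPba
    have haI : a ∈ Set.Icc (0:ℝ) 1 := hPsub haP
    have hbI : b ∈ Set.Icc (0:ℝ) 1 := hPsub hbP
    have hab : a ≤ b := csInf_le_csSup hPne hPbb hPba
    have hPK : postcritical d F ⊆ Set.Icc a b :=
      fun p hp => ⟨csInf_le hPbb hp, le_csSup hPba hp⟩
    have hfP : ∀ p ∈ postcritical d F, F.f p ∈ postcritical d F := by
      intro p hp
      have h1 : ContinuousOn F.f (closure (⋃ i ∈ Set.Ioo 0 d, ⋃ n ∈ Set.Ici 1, {F.f^[n] (F.c i)})) :=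
        F.cont.mono (by rw [← hPdef]; exact hPsub)
      have h2 := h1.image_closure
      have h3 : closure (F.f '' (⋃ i ∈ Set.Ioo 0 d, ⋃ n ∈ Set.Ici 1, {F.f^[n] (F.c i)}))
          ⊆ closure (⋃ i ∈ Set.Ioo 0 d, ⋃ n ∈ Set.Ici 1, {F.f^[n] (F.c i)}) :=
        closure_mono (by rintro _ ⟨z, hz, rfl⟩; exact hUf z hz)
      rw [hPdef] at hp ⊢
      exact h3 (h2 ⟨p, hp, rfl⟩)
    have hfa : F.f a ∈ Set.Icc a b := hPK (hfP a haP)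
    have hfb : F.f b ∈ Set.Icc a b := hPK (hfP b hbP)
    have hci : ∀ i, 0 < i → i < d → F.f (F.c i) ∈ Set.Icc a b := by
      intro i h1 h2
      have hm : F.f^[1] (F.c i) ∈ postcritical d F := by
        rw [hPdef]
        apply subset_closure
        simp only [Set.mem_iUnion, Set.mem_singleton_iff, exists_prop]
        exact ⟨i, Set.mem_Ioo.mpr ⟨h1, h2⟩, 1, Set.mem_Ici.mpr (le_refl 1), rfl⟩
      rw [Function.iterate_one] at hm
      exact hPK hm
    have hcover : ∀ z ∈ Set.Icc (0:ℝ) 1, ∃ k, k < d ∧ z ∈ Set.Icc (F.c k) (F.c (k+1)) := by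
      intro z hz
      have hQ0 : F.c 0 ≤ z := by rw [F.c0]; exact hz.1
      have hk0d : Nat.findGreatest (fun k => F.c k ≤ z) (d-1) ≤ d - 1 := Nat.findGreatest_le _
      have hQk0 : F.c (Nat.findGreatest (fun k => F.c k ≤ z) (d-1)) ≤ z :=
        Nat.findGreatest_spec (P := fun k => F.c k ≤ z) (Nat.zero_le _) hQ0
      refine ⟨Nat.findGreatest (fun k => F.c k ≤ z) (d-1), by omega, hQk0, ?_⟩
      by_cases h : Nat.findGreatest (fun k => F.c k ≤ z) (d-1) = d - 1
      · rw [show Nat.findGreatest (fun k => F.c k ≤ z) (d-1) + 1 = d from by omega, F.cd]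
        exact hz.2
      · have hng : ¬ (F.c (Nat.findGreatest (fun k => F.c k ≤ z) (d-1) + 1) ≤ z) :=
          Nat.findGreatest_is_greatest (P := fun k => F.c k ≤ z) (n := d-1) (by omega) (by omega)
        linarith [not_le.mp hng]
    have hmid : ∀ k, 0 < k → k + 1 < d → ∀ z ∈ Set.Icc (F.c k) (F.c (k+1)),
        F.f z ∈ Set.Icc a b := by
      intro k hk0 hk1 z hz
      have hek : F.f (F.c k) ∈ Set.Icc a b := hci k hk0 (by omega)
      have hek1 : F.f (F.c (k+1)) ∈ Set.Icc a b := hci (k+1) (by omega) hk1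
      have hmemk : F.c k ∈ Set.Icc (F.c k) (F.c (k+1)) :=
        ⟨le_refl _, hcle k (k+1) (by omega) (by omega)⟩
      have hmemk1 : F.c (k+1) ∈ Set.Icc (F.c k) (F.c (k+1)) :=
        ⟨hcle k (k+1) (by omega) (by omega), le_refl _⟩
      rcases F.piece k (by omega) with hm | hm
      · exact ⟨le_trans hek.1 (hm.monotoneOn hmemk hz hz.1),
          le_trans (hm.monotoneOn hz hmemk1 hz.2) hek1.2⟩
      · exact ⟨le_trans hek1.1 (hm.antitoneOn hz hmemk1 hz.2),
          le_trans (hm.antitoneOn hmemk hz hz.1) hek.2⟩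
    have hfK : ∀ z ∈ Set.Icc a b, F.f z ∈ Set.Icc a b := by
      intro z hz
      have hzI : z ∈ Set.Icc (0:ℝ) 1 := ⟨le_trans haI.1 hz.1, le_trans hz.2 hbI.2⟩
      obtain ⟨k, hk, hzk⟩ := hcover z hzI
      obtain ⟨u, huI, huz, hfu⟩ : ∃ u, u ∈ Set.Icc (F.c k) (F.c (k+1)) ∧ u ≤ z ∧
          F.f u ∈ Set.Icc a b := by
        by_cases hk0 : k = 0
        · subst hk0
          exact ⟨a, ⟨by rw [F.c0]; exact haI.1, le_trans hz.1 hzk.2⟩, hz.1, hfa⟩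
        · exact ⟨F.c k, ⟨le_refl _, le_trans hzk.1 hzk.2⟩, hzk.1,
            hci k (Nat.pos_of_ne_zero hk0) hk⟩
      obtain ⟨v, hvI, hzv, hfv⟩ : ∃ v, v ∈ Set.Icc (F.c k) (F.c (k+1)) ∧ z ≤ v ∧
          F.f v ∈ Set.Icc a b := by
        by_cases hk1 : k + 1 = d
        · exact ⟨b, ⟨le_trans hzk.1 hz.2, by rw [hk1, F.cd]; exact hbI.2⟩, hz.2, hfb⟩
        · exact ⟨F.c (k+1), ⟨le_trans hzk.1 hzk.2, le_refl _⟩, hzk.2,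
            hci (k+1) (by omega) (by omega)⟩
      rcases F.piece k hk with hm | hm
      · exact ⟨le_trans hfu.1 (hm.monotoneOn huI hzk huz),
          le_trans (hm.monotoneOn hzk hvI hzv) hfv.2⟩
      · exact ⟨le_trans hfv.1 (hm.antitoneOn hzk hvI hzv),
          le_trans (hm.antitoneOn huI hzk huz) hfu.2⟩
    have hde : d - 1 + 1 = d := by omega
    have hc1K : F.f (F.c 1) ∈ Set.Icc a b := hci 1 (by omega) (by omega)
    have hcd1K : F.f (F.c (d-1)) ∈ Set.Icc a b := hci (d-1) (by omega) (by omega)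
    have hesc0 : (StrictMonoOn F.f (Set.Icc (F.c 0) (F.c 1)) ∧
          ∀ z ∈ Set.Icc (F.c 0) (F.c 1), F.f z ≤ b)
        ∨ (StrictAntiOn F.f (Set.Icc (F.c 0) (F.c 1)) ∧
          ∀ z ∈ Set.Icc (F.c 0) (F.c 1), a ≤ F.f z) := by
      have hp0 := F.piece 0 F.pos
      norm_num at hp0
      have hc1m : F.c 1 ∈ Set.Icc (F.c 0) (F.c 1) := ⟨hcle 0 1 (by omega) (by omega), le_refl _⟩
      rcases hp0 with hm | hm
      · exact Or.inl ⟨hm, fun z hz => le_trans (hm.monotoneOn hz hc1m hz.2) hc1K.2⟩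
      · exact Or.inr ⟨hm, fun z hz => le_trans hc1K.1 (hm.antitoneOn hz hc1m hz.2)⟩
    have hesc1 : (StrictMonoOn F.f (Set.Icc (F.c (d-1)) (F.c d)) ∧
          ∀ z ∈ Set.Icc (F.c (d-1)) (F.c d), a ≤ F.f z)
        ∨ (StrictAntiOn F.f (Set.Icc (F.c (d-1)) (F.c d)) ∧
          ∀ z ∈ Set.Icc (F.c (d-1)) (F.c d), F.f z ≤ b) := by
      have hp1 := F.piece (d-1) (by omega)
      rw [hde] at hp1
      have hcm : F.c (d-1) ∈ Set.Icc (F.c (d-1)) (F.c d) :=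
        ⟨le_refl _, hcle (d-1) d (by omega) (by omega)⟩
      rcases hp1 with hm | hm
      · exact Or.inl ⟨hm, fun z hz => le_trans hcd1K.1 (hm.monotoneOn hcm hz hz.1)⟩
      · exact Or.inr ⟨hm, fun z hz => le_trans (hm.antitoneOn hcm hz hz.1) hcd1K.2⟩
    -- the complement of the core
    have hBA : BddAbove ((fun z => ‖φ z‖) '' (Set.Icc (0:ℝ) 1 \ Set.Icc a b)) := by
      refine ⟨C, ?_⟩
      rintro _ ⟨z, hz, rfl⟩
      exact hbdd z hz.1
    have hMn : ∀ z ∈ Set.Icc (0:ℝ) 1 \ Set.Icc a b,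
        ‖φ z‖ ≤ sSup ((fun z => ‖φ z‖) '' (Set.Icc (0:ℝ) 1 \ Set.Icc a b)) :=
      fun z hz => le_csSup hBA (Set.mem_image_of_mem _ hz)
    have hmidJ : ∀ y : ℝ, y ∉ Set.Icc a b → ∀ k, k ≠ 0 → k ≠ d - 1 → k < d →
        y ∉ F.f '' Set.Icc (F.c k) (F.c (k+1)) := by
      intro y hyK k h0 h1 hk hmem
      obtain ⟨z, hzI, hfz⟩ := hmem
      exact hyK (hfz ▸ hmid k (Nat.pos_of_ne_zero h0) (by omega) z hzI)
    have hstep : ∀ y ∈ Set.Icc (0:ℝ) 1 \ Set.Icc a b,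
        ‖ξ * φ y‖ ≤ sSup ((fun z => ‖φ z‖) '' (Set.Icc (0:ℝ) 1 \ Set.Icc a b)) := by
      intro y hy
      obtain ⟨hyI, hyK⟩ := hy
      have hsub : ({0, d-1} : Finset ℕ) ⊆ Finset.range d := by
        intro k hk
        simp only [Finset.mem_insert, Finset.mem_singleton] at hk
        rcases hk with rfl | rfl <;> (rw [Finset.mem_range]; omega)
      have heq : ξ * φ y
          = φ (finv 0 y) * ((F.f '' Set.Icc (F.c 0) (F.c (0 + 1))).indicator (fun _ => (1 : ℝ)) y : ℝ)
          + φ (finv (d-1) y) * ((F.f '' Set.Icc (F.c (d-1)) (F.c (d-1+1))).indicator (fun _ => (1 : ℝ)) y : ℝ) := by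
        calc ξ * φ y = ∑ k ∈ Finset.range d,
            φ (finv k y) * ((F.f '' Set.Icc (F.c k) (F.c (k + 1))).indicator (fun _ => (1 : ℝ)) y : ℝ) := by
              rw [← heig y hyI, hTexp y]
          _ = ∑ k ∈ ({0, d-1} : Finset ℕ),
            φ (finv k y) * ((F.f '' Set.Icc (F.c k) (F.c (k + 1))).indicator (fun _ => (1 : ℝ)) y : ℝ) := by
              refine (Finset.sum_subset hsub ?_).symm
              intro k hkr hknot
              simp only [Finset.mem_insert, Finset.mem_singleton, not_or] at hknot
              exact htermz y k (hmidJ y hyK k hknot.1 hknot.2 (Finset.mem_range.mp hkr))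
          _ = _ := Finset.sum_pair (show (0:ℕ) ≠ d - 1 from by omega)
      by_cases hm0 : y ∈ F.f '' Set.Icc (F.c 0) (F.c (0+1)) <;>
        by_cases hm1 : y ∈ F.f '' Set.Icc (F.c (d-1)) (F.c (d-1+1))
      · -- both end branches contain a preimage of y
        obtain ⟨hz0I, hfz0⟩ := hinv' 0 F.pos y hm0
        obtain ⟨hz1I, hfz1⟩ := hinv' (d-1) (by omega) y hm1
        have hz0I' : finv 0 y ∈ Set.Icc (F.c 0) (F.c 1) := by simpa using hz0I
        have hz1I' : finv (d-1) y ∈ Set.Icc (F.c (d-1)) (F.c d) := by have h := hz1I; rw [hde] at h; exact h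
        have hz0K : finv 0 y ∉ Set.Icc a b := fun h => hyK (hfz0 ▸ hfK _ h)
        have hz1K : finv (d-1) y ∉ Set.Icc a b := fun h => hyK (hfz1 ▸ hfK _ h)
        have hz0I01 : finv 0 y ∈ Set.Icc (0:ℝ) 1 := hIsub 0 F.pos hz0I
        have hz1I01 : finv (d-1) y ∈ Set.Icc (0:ℝ) 1 := hIsub (d-1) (by omega) hz1I
        rcases hesc0 with ⟨hmono0, hub0⟩ | ⟨hanti0, hlb0⟩ <;>
          rcases hesc1 with ⟨hmono1, hlb1⟩ | ⟨hanti1, hub1⟩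
        · -- increasing, increasing: impossible
          exfalso
          have h1 : a ≤ y := by have := hlb1 _ hz1I'; rwa [hfz1] at this
          have h2 : y ≤ b := by have := hub0 _ hz0I'; rwa [hfz0] at this
          exact hyK ⟨h1, h2⟩
        · -- increasing, decreasing: y < a, and the last-branch preimage is dead
          have hyb : y ≤ b := by have := hub0 _ hz0I'; rwa [hfz0] at this
          have hya : y < a := by
            by_contra h
            push_neg at h
            exact hyK ⟨h, hyb⟩
          have hz1b : b < finv (d-1) y := by
            rcases lt_or_ge b (finv (d-1) y) with h | h
            · exact h
            · exfalso
              have hza : finv (d-1) y < a := by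
                rcases lt_or_ge (finv (d-1) y) a with h' | h'
                · exact h'
                · exact absurd ⟨h', h⟩ hz1K
              have haU : a ∈ Set.Icc (F.c (d-1)) (F.c d) :=
                ⟨le_trans hz1I'.1 (le_of_lt hza), by rw [F.cd]; exact haI.2⟩
              have hfa' := hanti1.antitoneOn hz1I' haU (le_of_lt hza)
              rw [hfz1] at hfa'
              linarith [hfa.1]
          have hz1phi : φ (finv (d-1) y) = 0 := by
            have hnone : ∀ k ∈ Finset.range d,
                φ (finv k (finv (d-1) y)) * ((F.f '' Set.Icc (F.c k) (F.c (k + 1))).indicator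
                  (fun _ => (1 : ℝ)) (finv (d-1) y) : ℝ) = 0 := by
              intro k hk
              have hkd : k < d := Finset.mem_range.mp hk
              apply htermz
              intro hmem
              obtain ⟨w, hwI, hfw⟩ := hmem
              by_cases hk0 : k = 0
              · subst hk0
                have hwI' : w ∈ Set.Icc (F.c 0) (F.c 1) := by simpa using hwI
                have := hub0 w hwI'
                rw [hfw] at this
                linarith
              · by_cases hk1 : k = d - 1
                · subst hk1
                  have hwI' : w ∈ Set.Icc (F.c (d-1)) (F.c d) := by have h := hwI; rw [hde] at h; exact h
                  have := hub1 w hwI'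
                  rw [hfw] at this
                  linarith
                · have hmemab := hmid k (Nat.pos_of_ne_zero hk0) (by omega) w hwI
                  rw [hfw] at hmemab
                  exact absurd hmemab (by intro h; linarith [h.2])
            have h0 : ξ * φ (finv (d-1) y) = 0 := by
              rw [← heig _ hz1I01, hTexp]
              exact Finset.sum_eq_zero hnone
            rcases mul_eq_zero.mp h0 with h | h
            · exact absurd h hξ0
            · exact h
          rw [heq, htermo y 0 hm0, htermo y (d-1) hm1, hz1phi, add_zero]
          exact hMn _ ⟨hz0I01, hz0K⟩
        · -- decreasing, increasing: b < y, and the first-branch preimage is dead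
          have hay : a ≤ y := by have := hlb0 _ hz0I'; rwa [hfz0] at this
          have hby : b < y := by
            by_contra h
            push_neg at h
            exact hyK ⟨hay, h⟩
          have hz0a : finv 0 y < a := by
            rcases lt_or_ge (finv 0 y) a with h | h
            · exact h
            · exfalso
              have hzb : b < finv 0 y := by
                rcases lt_or_ge b (finv 0 y) with h' | h'
                · exact h'
                · exact absurd ⟨h, h'⟩ hz0K
              have hbU : b ∈ Set.Icc (F.c 0) (F.c 1) :=
                ⟨by rw [F.c0]; exact hbI.1, le_trans (le_of_lt hzb) hz0I'.2⟩
              have hfb' := hanti0.antitoneOn hbU hz0I' (le_of_lt hzb)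
              rw [hfz0] at hfb'
              linarith [hfb.2]
          have hz0phi : φ (finv 0 y) = 0 := by
            have hnone : ∀ k ∈ Finset.range d,
                φ (finv k (finv 0 y)) * ((F.f '' Set.Icc (F.c k) (F.c (k + 1))).indicator
                  (fun _ => (1 : ℝ)) (finv 0 y) : ℝ) = 0 := by
              intro k hk
              have hkd : k < d := Finset.mem_range.mp hk
              apply htermz
              intro hmem
              obtain ⟨w, hwI, hfw⟩ := hmem
              by_cases hk0 : k = 0
              · subst hk0
                have hwI' : w ∈ Set.Icc (F.c 0) (F.c 1) := by simpa using hwI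
                have := hlb0 w hwI'
                rw [hfw] at this
                linarith
              · by_cases hk1 : k = d - 1
                · subst hk1
                  have hwI' : w ∈ Set.Icc (F.c (d-1)) (F.c d) := by have h := hwI; rw [hde] at h; exact h
                  have := hlb1 w hwI'
                  rw [hfw] at this
                  linarith
                · have hmemab := hmid k (Nat.pos_of_ne_zero hk0) (by omega) w hwI
                  rw [hfw] at hmemab
                  exact absurd hmemab (by intro h; linarith [h.1])
            have h0 : ξ * φ (finv 0 y) = 0 := by
              rw [← heig _ hz0I01, hTexp]
              exact Finset.sum_eq_zero hnone
            rcases mul_eq_zero.mp h0 with h | h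
            · exact absurd h hξ0
            · exact h
          rw [heq, htermo y 0 hm0, htermo y (d-1) hm1, hz0phi, zero_add]
          exact hMn _ ⟨hz1I01, hz1K⟩
        · -- decreasing, decreasing: impossible
          exfalso
          have h1 : a ≤ y := by have := hlb0 _ hz0I'; rwa [hfz0] at this
          have h2 : y ≤ b := by have := hub1 _ hz1I'; rwa [hfz1] at this
          exact hyK ⟨h1, h2⟩
      · -- only the first branch
        rw [heq, htermo y 0 hm0, htermz y (d-1) hm1, add_zero]
        obtain ⟨hz0I, hfz0⟩ := hinv' 0 F.pos y hm0
        exact hMn _ ⟨hIsub 0 F.pos hz0I, fun h => hyK (hfz0 ▸ hfK _ h)⟩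
      · -- only the last branch
        rw [heq, htermz y 0 hm0, htermo y (d-1) hm1, zero_add]
        obtain ⟨hz1I, hfz1⟩ := hinv' (d-1) (by omega) y hm1
        exact hMn _ ⟨hIsub (d-1) (by omega) hz1I, fun h => hyK (hfz1 ▸ hfK _ h)⟩
      · -- no preimages at all
        rw [heq, htermz y 0 hm0, htermz y (d-1) hm1, add_zero]
        rw [norm_zero]
        exact le_trans (norm_nonneg (φ y)) (hMn y ⟨hyI, hyK⟩)
    have hxT : x ∈ Set.Icc (0:ℝ) 1 \ Set.Icc a b := by
      refine ⟨hx.1, ?_⟩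
      have h2 := hx.2
      rw [hcore] at h2
      exact h2
    exact sup_trick hξ (fun z hz => hbdd z hz.1) hstep x hxT
end

section
/- Let f be a unimodal map with turning point c and let J ⊆ I be a closed interval. If J is slow (there is no k ≥ 0 with c ∈ f^k(J) and c ∈ f^{k+1}(J)), then the number of laps satisfies ℓ(f^n, J) ≤ 2^{⌈n/2⌉+1} for all n ≥ 1; consequently Var_J(f^n) ≤ C·2^{n/2} for a constant C independent of n. -/
open Set

/-- `LapsLE g a b N`: the restriction of `g` to `[a,b]` has at most `N` laps
(intervals of monotonicity). -/
def LapsLE (g : ℝ → ℝ) (a b : ℝ) (N : ℕ) : Prop :=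
  ∃ t : ℕ → ℝ, t 0 = a ∧ t N = b ∧ (∀ i j, i ≤ j → j ≤ N → t i ≤ t j) ∧
    ∀ k < N, MonotoneOn g (Set.Icc (t k) (t (k + 1))) ∨
      AntitoneOn g (Set.Icc (t k) (t (k + 1)))

section S12Aux

open scoped ENNReal

/-- mono-or-anti composition. -/
lemma s12_comp {f g : ℝ → ℝ} {s t : Set ℝ}
    (hf : MonotoneOn f t ∨ AntitoneOn f t)
    (hg : MonotoneOn g s ∨ AntitoneOn g s) (hm : Set.MapsTo g s t) :
    MonotoneOn (f ∘ g) s ∨ AntitoneOn (f ∘ g) s := by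
  rcases hf with hf | hf <;> rcases hg with hg | hg
  · exact Or.inl fun x hx y hy hxy => hf (hm hx) (hm hy) (hg hx hy hxy)
  · exact Or.inr fun x hx y hy hxy => hf (hm hy) (hm hx) (hg hx hy hxy)
  · exact Or.inr fun x hx y hy hxy => hf (hm hx) (hm hy) (hg hx hy hxy)
  · exact Or.inl fun x hx y hy hxy => hf (hm hy) (hm hx) (hg hx hy hxy)

/-- a continuous function on an interval avoiding `c` stays on one side. -/
lemma s12_side {c u v : ℝ} {h : ℝ → ℝ} (huv : u ≤ v)
    (hcont : ContinuousOn h (Icc u v)) (hm : MapsTo h (Icc u v) (Icc 0 1))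
    (hc : c ∉ h '' Icc u v) :
    MapsTo h (Icc u v) (Icc 0 c) ∨ MapsTo h (Icc u v) (Icc c 1) := by
  by_cases hall : ∀ x ∈ Icc u v, h x ≤ c
  · exact Or.inl fun x hx => ⟨(hm hx).1, hall x hx⟩
  · push_neg at hall
    obtain ⟨x, hx, hxc⟩ := hall
    refine Or.inr fun y hy => ⟨?_, (hm hy).2⟩
    by_contra hyc
    push_neg at hyc
    have hsub : uIcc y x ⊆ Icc u v := by
      rw [uIcc_eq_union]
      exact union_subset (Icc_subset_Icc hy.1 hx.2) (Icc_subset_Icc hx.1 hy.2)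
    have : c ∈ h '' uIcc y x := by
      apply intermediate_value_uIcc (hcont.mono hsub)
      rw [mem_uIcc]
      exact Or.inl ⟨le_of_lt hyc, le_of_lt hxc⟩
    exact hc (image_mono (f := h) hsub this)

/-- splitting a monotone-or-antitone function at the level `c`. -/
lemma s12_split {c u v : ℝ} {h : ℝ → ℝ} (huv : u ≤ v)
    (hcont : ContinuousOn h (Icc u v)) (hm : MapsTo h (Icc u v) (Icc 0 1))
    (hmono : MonotoneOn h (Icc u v) ∨ AntitoneOn h (Icc u v)) :
    ∃ w, u ≤ w ∧ w ≤ v ∧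
      (MapsTo h (Icc u w) (Icc 0 c) ∨ MapsTo h (Icc u w) (Icc c 1)) ∧
      (MapsTo h (Icc w v) (Icc 0 c) ∨ MapsTo h (Icc w v) (Icc c 1)) := by
  have hu : u ∈ Icc u v := ⟨le_rfl, huv⟩
  have hv : v ∈ Icc u v := ⟨huv, le_rfl⟩
  rcases hmono with hmono | hmono
  · by_cases h1 : h v ≤ c
    · refine ⟨v, huv, le_rfl, Or.inl fun x hx => ⟨(hm ⟨hx.1, hx.2⟩).1,
        le_trans (hmono ⟨hx.1, hx.2⟩ hv hx.2) h1⟩, Or.inl fun x hx => ?_⟩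
      have hx' : x ∈ Icc u v := ⟨le_trans huv hx.1, hx.2⟩
      exact ⟨(hm hx').1, le_trans (hmono hx' hv hx.2) h1⟩
    · by_cases h2 : c ≤ h u
      · refine ⟨u, le_rfl, huv, Or.inr fun x hx => ?_, Or.inr fun x hx => ?_⟩
        · have hx' : x ∈ Icc u v := ⟨hx.1, le_trans hx.2 huv⟩
          exact ⟨le_trans h2 (hmono hu hx' hx.1), (hm hx').2⟩
        · exact ⟨le_trans h2 (hmono hu hx hx.1), (hm hx).2⟩
      · push_neg at h1 h2
        have : c ∈ Icc (h u) (h v) := ⟨le_of_lt h2, le_of_lt h1⟩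
        obtain ⟨w, hw, hwc⟩ := intermediate_value_Icc huv hcont this
        refine ⟨w, hw.1, hw.2, Or.inl fun x hx => ?_, Or.inr fun x hx => ?_⟩
        · have hx' : x ∈ Icc u v := ⟨hx.1, le_trans hx.2 hw.2⟩
          exact ⟨(hm hx').1, hwc ▸ hmono hx' hw hx.2⟩
        · have hx' : x ∈ Icc u v := ⟨le_trans hw.1 hx.1, hx.2⟩
          exact ⟨hwc ▸ hmono hw hx' hx.1, (hm hx').2⟩
  · by_cases h1 : h u ≤ c
    · refine ⟨u, le_rfl, huv, Or.inl fun x hx => ?_, Or.inl fun x hx => ?_⟩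
      · have hx' : x ∈ Icc u v := ⟨hx.1, le_trans hx.2 huv⟩
        exact ⟨(hm hx').1, le_trans (hmono hu hx' hx.1) h1⟩
      · exact ⟨(hm hx).1, le_trans (hmono hu hx hx.1) h1⟩
    · by_cases h2 : c ≤ h v
      · refine ⟨v, huv, le_rfl, Or.inr fun x hx => ?_, Or.inr fun x hx => ?_⟩
        · have hx' : x ∈ Icc u v := ⟨hx.1, hx.2⟩
          exact ⟨le_trans h2 (hmono hx' hv hx.2), (hm hx').2⟩
        · have hx' : x ∈ Icc u v := ⟨le_trans huv hx.1, hx.2⟩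
          exact ⟨le_trans h2 (hmono hx' hv hx.2), (hm hx').2⟩
      · push_neg at h1 h2
        have : c ∈ Icc (h v) (h u) := ⟨le_of_lt h2, le_of_lt h1⟩
        obtain ⟨w, hw, hwc⟩ := intermediate_value_Icc' huv hcont this
        refine ⟨w, hw.1, hw.2, Or.inr fun x hx => ?_, Or.inl fun x hx => ?_⟩
        · have hx' : x ∈ Icc u v := ⟨hx.1, le_trans hx.2 hw.2⟩
          exact ⟨hwc ▸ hmono hx' hw hx.2, (hm hx').2⟩
        · have hx' : x ∈ Icc u v := ⟨le_trans hw.1 hx.1, hx.2⟩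
          exact ⟨(hm hx').1, hwc ▸ hmono hw hx' hx.1⟩

/-- key two-laps lemma: if `g` is monotone on `[u,v]` and either `g` or `f∘g`
avoids `c` on `[u,v]`, then `f∘f∘g` has at most two laps on `[u,v]`. -/
lemma s12_two {f : ℝ → ℝ} {c : ℝ}
    (hfc : ContinuousOn f (Icc 0 1)) (hfm : MapsTo f (Icc 0 1) (Icc 0 1))
    (hL : MonotoneOn f (Icc 0 c) ∨ AntitoneOn f (Icc 0 c))
    (hR : MonotoneOn f (Icc c 1) ∨ AntitoneOn f (Icc c 1))
    {g : ℝ → ℝ} {u v : ℝ} (huv : u ≤ v)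
    (hgc : ContinuousOn g (Icc u v)) (hgm : MapsTo g (Icc u v) (Icc 0 1))
    (hgmono : MonotoneOn g (Icc u v) ∨ AntitoneOn g (Icc u v))
    (havoid : c ∉ g '' Icc u v ∨ c ∉ (f ∘ g) '' Icc u v) :
    ∃ w, u ≤ w ∧ w ≤ v ∧
      (MonotoneOn (f ∘ f ∘ g) (Icc u w) ∨ AntitoneOn (f ∘ f ∘ g) (Icc u w)) ∧
      (MonotoneOn (f ∘ f ∘ g) (Icc w v) ∨ AntitoneOn (f ∘ f ∘ g) (Icc w v)) := by
  have hL' : ∀ {s : Set ℝ} {h : ℝ → ℝ}, (MapsTo h s (Icc 0 c) ∨ MapsTo h s (Icc c 1)) →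
      (MonotoneOn h s ∨ AntitoneOn h s) → MonotoneOn (f ∘ h) s ∨ AntitoneOn (f ∘ h) s := by
    rintro s h (hm | hm) hmono
    · exact s12_comp hL hmono hm
    · exact s12_comp hR hmono hm
  have hfgc : ContinuousOn (f ∘ g) (Icc u v) := hfc.comp hgc hgm
  have hfgm : MapsTo (f ∘ g) (Icc u v) (Icc 0 1) := hfm.comp hgm
  rcases havoid with hav | hav
  · have hfg : MonotoneOn (f ∘ g) (Icc u v) ∨ AntitoneOn (f ∘ g) (Icc u v) :=
      hL' (s12_side huv hgc hgm hav) hgmono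
    obtain ⟨w, hw1, hw2, hs1, hs2⟩ := s12_split (c := c) huv hfgc hfgm hfg
    have m1 : Icc u w ⊆ Icc u v := Icc_subset_Icc le_rfl hw2
    have m2 : Icc w v ⊆ Icc u v := Icc_subset_Icc hw1 le_rfl
    refine ⟨w, hw1, hw2, ?_, ?_⟩
    · exact hL' hs1 (hfg.imp (fun h => h.mono m1) (fun h => h.mono m1))
    · exact hL' hs2 (hfg.imp (fun h => h.mono m2) (fun h => h.mono m2))
  · obtain ⟨w, hw1, hw2, hs1, hs2⟩ := s12_split (c := c) huv hgc hgm hgmono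
    have m1 : Icc u w ⊆ Icc u v := Icc_subset_Icc le_rfl hw2
    have m2 : Icc w v ⊆ Icc u v := Icc_subset_Icc hw1 le_rfl
    have key : ∀ {p q : ℝ}, p ≤ q → Icc p q ⊆ Icc u v →
        (MapsTo g (Icc p q) (Icc 0 c) ∨ MapsTo g (Icc p q) (Icc c 1)) →
        MonotoneOn (f ∘ f ∘ g) (Icc p q) ∨ AntitoneOn (f ∘ f ∘ g) (Icc p q) := by
      intro p q hpq hsub hside
      have hg' : MonotoneOn g (Icc p q) ∨ AntitoneOn g (Icc p q) :=
        hgmono.imp (fun h => h.mono hsub) (fun h => h.mono hsub)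
      have hfg' : MonotoneOn (f ∘ g) (Icc p q) ∨ AntitoneOn (f ∘ g) (Icc p q) :=
        hL' hside hg'
      have hav' : c ∉ (f ∘ g) '' Icc p q := fun h => hav (image_mono hsub h)
      exact hL' (s12_side hpq (hfgc.mono hsub) (hfgm.mono_left hsub) hav') hfg'
    exact ⟨w, hw1, hw2, key hw1 m1 hs1, key hw2 m2 hs2⟩

lemma s12_pairwise {t : ℕ → ℝ} {N : ℕ} (h : ∀ i < N, t i ≤ t (i + 1)) :
    ∀ i j, i ≤ j → j ≤ N → t i ≤ t j := by
  have key : ∀ d i, i + d ≤ N → t i ≤ t (i + d) := by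
    intro d
    induction d with
    | zero => intro i _; simp
    | succ d ih =>
      intro i hi
      have h1 : t i ≤ t (i + d) := ih i (by omega)
      have h2 : t (i + d) ≤ t (i + d + 1) := h (i + d) (by omega)
      simpa [Nat.add_assoc] using h1.trans h2
  intro i j hij hjN
  have := key (j - i) i (by omega)
  rwa [Nat.add_sub_cancel' hij] at this

lemma s12_weaken {g : ℝ → ℝ} {a b : ℝ} {N M : ℕ} (hNM : N ≤ M)
    (h : LapsLE g a b N) : LapsLE g a b M := by
  obtain ⟨t, h0, hN, hmono, hlap⟩ := h
  refine ⟨fun i => t (min i N), by simpa, by simp [Nat.min_eq_right hNM, hN], ?_, ?_⟩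
  · intro i j hij _
    exact hmono _ _ (by omega) (by omega)
  · intro k _
    by_cases hk : k < N
    · have e1 : min k N = k := by omega
      have e2 : min (k + 1) N = k + 1 := by omega
      simp only [e1, e2]
      exact hlap k hk
    · have e1 : min k N = N := by omega
      have e2 : min (k + 1) N = N := by omega
      simp only [e1, e2]
      left
      intro x hx y hy _
      have : x = y := le_antisymm (hx.2.trans hy.1) (hy.2.trans hx.1)
      rw [this]

lemma s12_doubling {f g : ℝ → ℝ} {a b : ℝ} {N : ℕ}
    (hlaps : LapsLE g a b N)
    (H : ∀ u v : ℝ, a ≤ u → u ≤ v → v ≤ b →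
      (MonotoneOn g (Icc u v) ∨ AntitoneOn g (Icc u v)) →
      ∃ w, u ≤ w ∧ w ≤ v ∧
        (MonotoneOn f (Icc u w) ∨ AntitoneOn f (Icc u w)) ∧
        (MonotoneOn f (Icc w v) ∨ AntitoneOn f (Icc w v))) :
    LapsLE f a b (2 * N) := by
  obtain ⟨t, h0, hN, hmono, hlap⟩ := hlaps
  have hw : ∀ k, ∃ w, k < N → (t k ≤ w ∧ w ≤ t (k + 1) ∧
      (MonotoneOn f (Icc (t k) w) ∨ AntitoneOn f (Icc (t k) w)) ∧
      (MonotoneOn f (Icc w (t (k + 1))) ∨ AntitoneOn f (Icc w (t (k + 1))))) := by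
    intro k
    by_cases hk : k < N
    · obtain ⟨w, hw⟩ := H (t k) (t (k + 1)) (h0 ▸ hmono 0 k (by omega) (by omega))
        (hmono k (k + 1) (by omega) (by omega)) (hN ▸ hmono (k + 1) N (by omega) le_rfl)
        (hlap k hk)
      exact ⟨w, fun _ => hw⟩
    · exact ⟨0, fun h => absurd h hk⟩
  choose w hwspec using hw
  refine ⟨fun i => if i % 2 = 0 then t (i / 2) else w (i / 2), by simpa using h0, ?_, ?_, ?_⟩
  · have e1 : (2 * N) % 2 = 0 := by omega
    have e2 : (2 * N) / 2 = N := by omega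
    simp [e1, e2, hN]
  · apply s12_pairwise
    intro i hi
    rcases Nat.even_or_odd i with ⟨m, hm⟩ | ⟨m, hm⟩
    · have hmN : m < N := by omega
      have e1 : i % 2 = 0 := by omega
      have e2 : i / 2 = m := by omega
      have e3 : (i + 1) % 2 = 1 := by omega
      have e4 : (i + 1) / 2 = m := by omega
      simp only [e1, e2, e3, e4]
      simpa using (hwspec m hmN).1
    · have hmN : m < N := by omega
      have e1 : i % 2 = 1 := by omega
      have e2 : i / 2 = m := by omega
      have e3 : (i + 1) % 2 = 0 := by omega
      have e4 : (i + 1) / 2 = m + 1 := by omega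
      simp only [e1, e2, e3, e4]
      simpa using (hwspec m hmN).2.1
  · intro k hk
    rcases Nat.even_or_odd k with ⟨m, hm⟩ | ⟨m, hm⟩
    · have hmN : m < N := by omega
      have e1 : k % 2 = 0 := by omega
      have e2 : k / 2 = m := by omega
      have e3 : (k + 1) % 2 = 1 := by omega
      have e4 : (k + 1) / 2 = m := by omega
      simp only [e1, e2, e3, e4]
      simpa using (hwspec m hmN).2.2.1
    · have hmN : m < N := by omega
      have e1 : k % 2 = 1 := by omega
      have e2 : k / 2 = m := by omega
      have e3 : (k + 1) % 2 = 0 := by omega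
      have e4 : (k + 1) / 2 = m + 1 := by omega
      simp only [e1, e2, e3, e4]
      simpa using (hwspec m hmN).2.2.2

lemma s12_evar_neg (g : ℝ → ℝ) (s : Set ℝ) :
    eVariationOn (fun x => -g x) s = eVariationOn g s := by
  simp [eVariationOn, edist_neg_neg]

lemma s12_piece_var {g : ℝ → ℝ} {u v : ℝ} (huv : u ≤ v)
    (hm : MapsTo g (Icc u v) (Icc 0 1))
    (hmono : MonotoneOn g (Icc u v) ∨ AntitoneOn g (Icc u v)) :
    eVariationOn g (Icc u v) ≤ 1 := by
  have hu : u ∈ Icc u v := ⟨le_rfl, huv⟩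
  have hv : v ∈ Icc u v := ⟨huv, le_rfl⟩
  have hint : Icc u v ∩ Icc u v = Icc u v := inter_self _
  rcases hmono with hmono | hmono
  · have := hmono.eVariationOn_le hu hv
    rw [hint] at this
    refine this.trans ?_
    rw [← ENNReal.ofReal_one]
    exact ENNReal.ofReal_le_ofReal (by have := (hm hv).2; have := (hm hu).1; linarith)
  · have hmono' : MonotoneOn (fun x => -g x) (Icc u v) := fun x hx y hy hxy =>
      neg_le_neg (hmono hx hy hxy)
    have := hmono'.eVariationOn_le hu hv
    rw [hint, s12_evar_neg] at this
    refine this.trans ?_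
    rw [← ENNReal.ofReal_one]
    exact ENNReal.ofReal_le_ofReal (by have := (hm hu).2; have := (hm hv).1; linarith)

lemma s12_var_le {g : ℝ → ℝ} {a b : ℝ} {N : ℕ}
    (hm : MapsTo g (Icc a b) (Icc 0 1)) (h : LapsLE g a b N) :
    eVariationOn g (Icc a b) ≤ N := by
  obtain ⟨t, h0, hN, hmono, hlap⟩ := h
  have key : ∀ k ≤ N, eVariationOn g (Icc a (t k)) ≤ k := by
    intro k
    induction k with
    | zero =>
      intro _
      rw [h0]
      simpa using eVariationOn.subsingleton g (Set.subsingleton_Icc_of_le le_rfl)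
    | succ k ih =>
      intro hk
      have hak : a ≤ t k := h0 ▸ hmono 0 k (by omega) (by omega)
      have hkk : t k ≤ t (k + 1) := hmono k (k + 1) (by omega) hk
      have := eVariationOn.Icc_add_Icc g (s := Icc a (t (k + 1))) hak hkk ⟨hak, hkk⟩
      simp only [Icc_inter_Icc, max_self, min_self, min_eq_right hkk,
        max_eq_left hak, max_eq_right hak] at this
      rw [← this]
      have hsub2 : Icc (t k) (t (k + 1)) ⊆ Icc a b :=
        Icc_subset_Icc hak (hN ▸ hmono (k + 1) N (by omega) le_rfl)
      have p1 : eVariationOn g (Icc a (t k)) ≤ k := ih (by omega)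
      have p2 : eVariationOn g (Icc (t k) (t (k + 1))) ≤ 1 :=
        s12_piece_var hkk (hm.mono_left hsub2) (hlap k (by omega))
      calc eVariationOn g (Icc a (t k)) + eVariationOn g (Icc (t k) (t (k + 1)))
          ≤ (k : ℝ≥0∞) + 1 := add_le_add p1 p2
        _ = ((k + 1 : ℕ) : ℝ≥0∞) := by push_cast; ring
  have := key N le_rfl
  rwa [hN] at this

lemma s12_laps2 {g : ℝ → ℝ} {a b w : ℝ} (h1 : a ≤ w) (h2 : w ≤ b)
    (m1 : MonotoneOn g (Icc a w) ∨ AntitoneOn g (Icc a w))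
    (m2 : MonotoneOn g (Icc w b) ∨ AntitoneOn g (Icc w b)) :
    LapsLE g a b 2 := by
  refine ⟨fun i => if i = 0 then a else if i = 1 then w else b, by simp, by simp, ?_, ?_⟩
  · apply s12_pairwise
    intro i hi
    interval_cases i <;> simp [h1, h2]
  · intro k hk
    interval_cases k <;> simpa using (by assumption)

end S12Aux
/-- for a slow interval `J` of a unimodal map, `ℓ(fⁿ, J) ≤ 2^{⌈n/2⌉+1}`
for all `n ≥ 1`, hence `Var_J(fⁿ) ≤ C·2^{n/2}` with `C` independent of `n`. -/
theorem stmt_12 (F : PwMono 2) (a b : ℝ) (hab : a ≤ b) (ha : 0 ≤ a) (hb : b ≤ 1)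
    -- J = [a,b] is slow: there is no k with c ∈ f^k(J) and c ∈ f^{k+1}(J)
    (hslow : ¬ ∃ k : ℕ, F.c 1 ∈ F.f^[k] '' Set.Icc a b ∧ F.c 1 ∈ F.f^[k + 1] '' Set.Icc a b) :
    (∀ n : ℕ, 1 ≤ n → LapsLE (F.f^[n]) a b (2 ^ ((n + 1) / 2 + 1))) ∧
    ∃ C : ℝ, ∀ n : ℕ, 1 ≤ n →
      (eVariationOn (F.f^[n]) (Set.Icc a b)).toReal ≤ C * (2 : ℝ) ^ ((n : ℝ) / 2) := by
  set f := F.f with hf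
  set c := F.c 1 with hc
  have hL : MonotoneOn f (Icc 0 c) ∨ AntitoneOn f (Icc 0 c) := by
    have := F.piece 0 (by norm_num)
    rw [F.c0] at this
    exact this.imp StrictMonoOn.monotoneOn StrictAntiOn.antitoneOn
  have hR : MonotoneOn f (Icc c 1) ∨ AntitoneOn f (Icc c 1) := by
    have := F.piece 1 (by norm_num)
    rw [show (1 + 1 : ℕ) = 2 from rfl, F.cd] at this
    exact this.imp StrictMonoOn.monotoneOn StrictAntiOn.antitoneOn
  have subJ : Icc a b ⊆ Icc (0:ℝ) 1 := Icc_subset_Icc ha hb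
  have itm : ∀ n, MapsTo (f^[n]) (Icc (0:ℝ) 1) (Icc 0 1) := F.maps.iterate
  have itc : ∀ n, ContinuousOn (f^[n]) (Icc (0:ℝ) 1) := by
    intro n
    induction n with
    | zero => simpa using continuousOn_id
    | succ n ih =>
      rw [Function.iterate_succ']
      exact F.cont.comp ih (itm n)
  have hsl : ∀ k : ℕ, c ∉ f^[k] '' Icc a b ∨ c ∉ f^[k + 1] '' Icc a b := by
    intro k
    rcases Classical.em (c ∈ f^[k] '' Icc a b) with h1 | h1
    · exact Or.inr fun h2 => hslow ⟨k, h1, h2⟩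
    · exact Or.inl h1
  -- the doubling step
  have hstep : ∀ n N : ℕ, LapsLE (f^[n]) a b N → LapsLE (f^[n + 2]) a b (2 * N) := by
    intro n N hlaps
    apply s12_doubling hlaps
    intro u v hau huv hvb hmono
    have hsub : Icc u v ⊆ Icc a b := Icc_subset_Icc hau hvb
    have hsub01 : Icc u v ⊆ Icc (0:ℝ) 1 := hsub.trans subJ
    have havoid : c ∉ f^[n] '' Icc u v ∨ c ∉ (f ∘ f^[n]) '' Icc u v := by
      rcases hsl n with h1 | h1
      · exact Or.inl fun h => h1 (image_mono hsub h)
      · refine Or.inr fun h => h1 ?_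
        rw [Function.iterate_succ']
        exact image_mono hsub h
    obtain ⟨w, hw1, hw2, hm1, hm2⟩ := s12_two F.cont F.maps hL hR huv
      ((itc n).mono hsub01) ((itm n).mono_left hsub01) hmono havoid
    have hre : f^[n + 2] = f ∘ f ∘ f^[n] := by
      rw [Function.iterate_succ' f (n + 1), Function.iterate_succ' f n]
    rw [hre]
    exact ⟨w, hw1, hw2, hm1, hm2⟩
  -- base case n = 0 : one lap for the identity
  have base0 : LapsLE (f^[0]) a b 1 := by
    refine ⟨fun i => if i = 0 then a else b, by simp, by simp, ?_, ?_⟩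
    · apply s12_pairwise
      intro i hi
      interval_cases i
      simp [hab]
    · intro k hk
      left
      intro x _ y _ hxy
      simpa using hxy
  -- base case n = 1 : two laps for f
  have base1 : LapsLE (f^[1]) a b 2 := by
    obtain ⟨w, hw1, hw2, hs1, hs2⟩ := s12_split (c := c) (h := fun x => x) hab
      continuousOn_id (fun x hx => subJ hx) (Or.inl fun x _ y _ h => h)
    have sideMono : ∀ {s : Set ℝ},
        (MapsTo (fun x : ℝ => x) s (Icc 0 c) ∨ MapsTo (fun x : ℝ => x) s (Icc c 1)) →
        MonotoneOn f s ∨ AntitoneOn f s := by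
      rintro s (hs | hs)
      · exact hL.imp (fun m => m.mono fun x hx => hs hx) (fun m => m.mono fun x hx => hs hx)
      · exact hR.imp (fun m => m.mono fun x hx => hs hx) (fun m => m.mono fun x hx => hs hx)
    rw [Function.iterate_one]
    exact s12_laps2 hw1 hw2 (sideMono hs1) (sideMono hs2)
  -- the laps bound
  have key : ∀ n : ℕ, LapsLE (f^[n + 1]) a b (2 ^ ((n + 2) / 2 + 1)) ∧
      LapsLE (f^[n + 2]) a b (2 ^ ((n + 3) / 2 + 1)) := by
    intro n
    induction n with
    | zero =>
      constructor
      · exact s12_weaken (by norm_num) base1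
      · have := hstep 0 1 base0
        exact s12_weaken (by norm_num) this
    | succ n ih =>
      refine ⟨?_, ?_⟩
      · have h := ih.2
        rw [show n + 1 + 1 = n + 2 from rfl, show (n + 1 + 2) / 2 + 1 = (n + 3) / 2 + 1 by omega]
        exact h
      have := hstep (n + 1) (2 ^ ((n + 2) / 2 + 1)) ih.1
      have he : 2 * 2 ^ ((n + 2) / 2 + 1) = 2 ^ ((n + 1 + 3) / 2 + 1) := by
        rw [show (n + 1 + 3) / 2 + 1 = ((n + 2) / 2 + 1) + 1 by omega, pow_succ]
        ring
      rw [he] at this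
      simpa [show n + 1 + 2 = n + 3 from rfl] using this
  have laps : ∀ n : ℕ, 1 ≤ n → LapsLE (f^[n]) a b (2 ^ ((n + 1) / 2 + 1)) := by
    intro n hn
    obtain ⟨m, rfl⟩ : ∃ m, n = m + 1 := ⟨n - 1, by omega⟩
    simpa [show m + 1 + 1 = m + 2 from rfl] using (key m).1
  refine ⟨laps, 4, ?_⟩
  intro n hn
  set N : ℕ := 2 ^ ((n + 1) / 2 + 1) with hN
  have hvar : eVariationOn (f^[n]) (Icc a b) ≤ N :=
    s12_var_le ((itm n).mono_left subJ) (laps n hn)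
  have h1 : (eVariationOn (f^[n]) (Icc a b)).toReal ≤ (N : ℝ) := by
    have := ENNReal.toReal_mono (by simp) hvar
    simpa using this
  refine h1.trans ?_
  -- numeric estimate : N = 2^((n+1)/2+1) ≤ 4 * 2^(n/2)
  have hm2 : (((n + 1) / 2 + 1 : ℕ) : ℝ) ≤ (n : ℝ) / 2 + 2 := by
    have hn2 : ((n + 1) / 2 + 1 : ℕ) * 2 ≤ n + 4 := by omega
    have h := (Nat.cast_le (α := ℝ)).2 hn2
    push_cast at h ⊢
    linarith
  have e1 : (N : ℝ) = (2 : ℝ) ^ ((((n + 1) / 2 + 1 : ℕ) : ℝ)) := by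
    rw [Real.rpow_natCast]
    push_cast [hN]
    ring
  rw [e1]
  have e2 : (2 : ℝ) ^ ((((n + 1) / 2 + 1 : ℕ) : ℝ)) ≤ (2 : ℝ) ^ ((n : ℝ) / 2 + 2) :=
    Real.rpow_le_rpow_of_exponent_le (by norm_num) hm2
  refine e2.trans ?_
  rw [Real.rpow_add (by norm_num : (0:ℝ) < 2)]
  have : (2 : ℝ) ^ (2 : ℝ) = 4 := by
    rw [show (2 : ℝ) = ((2 : ℕ) : ℝ) from by norm_num, Real.rpow_natCast]
    norm_num
  rw [this]
  linarith [Real.rpow_nonneg (le_of_lt (by norm_num : (0:ℝ) < 2)) ((n : ℝ) / 2)]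
end

section
/- If g is a piecewise linear unimodal map of constant slope λ > √2, then g has no slow intervals; that is, every nondegenerate closed subinterval J of the core eventually satisfies that both g^k(J) and g^{k+1}(J) contain the turning point for some k. Consequently g is locally eventually onto its core. -/
open Set

noncomputable def tentT (lam : ℝ) : ℝ → ℝ := fun x => lam * min x (1 - x)

lemma tent_img_low {lam : ℝ} (hl : 0 ≤ lam) {u v : ℝ} (huv : u ≤ v) (hv : v ≤ 1/2) :
    tentT lam '' Icc u v = Icc (lam * u) (lam * v) := by
  have he : Set.EqOn (tentT lam) (lam * ·) (Icc u v) := by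
    intro x hx
    have : x ≤ 1 - x := by have := hx.2; linarith
    simp [tentT, min_eq_left this]
  rw [Set.image_congr he, Set.image_mul_left_Icc hl huv]

lemma tent_img_high {lam : ℝ} (hl : 0 ≤ lam) {u v : ℝ} (huv : u ≤ v) (hu : 1/2 ≤ u) :
    tentT lam '' Icc u v = Icc (lam * (1 - v)) (lam * (1 - u)) := by
  have he : Set.EqOn (tentT lam) ((lam * ·) ∘ (fun x => 1 - x)) (Icc u v) := by
    intro x hx
    have : 1 - x ≤ x := by have := hx.1; linarith
    simp [tentT, min_eq_right this]
  rw [Set.image_congr he, Set.image_comp, Set.image_const_sub_Icc,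
    Set.image_mul_left_Icc hl (by linarith)]

lemma Icc_union_same {a b c : ℝ} (ha : a ≤ c) (hb : b ≤ c) :
    Icc a c ∪ Icc b c = Icc (min a b) c := by
  ext x
  simp only [mem_union, mem_Icc, min_le_iff]
  constructor
  · rintro (⟨h1, h2⟩ | ⟨h1, h2⟩) <;> exact ⟨by tauto, h2⟩
  · rintro ⟨h1 | h1, h2⟩
    · exact Or.inl ⟨h1, h2⟩
    · exact Or.inr ⟨h1, h2⟩

lemma tent_img_mid {lam : ℝ} (hl : 0 ≤ lam) {u v : ℝ} (hu : u ≤ 1/2) (hv : 1/2 ≤ v) :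
    tentT lam '' Icc u v = Icc (min (lam * u) (lam * (1 - v))) (lam * (1/2)) := by
  rw [← Icc_union_Icc_eq_Icc hu hv, image_union, tent_img_low hl hu le_rfl,
    tent_img_high hl hv le_rfl]
  have h1 : lam * u ≤ lam * (1/2) := by nlinarith
  have h2 : lam * (1 - v) ≤ lam * (1 - 1/2) := by nlinarith
  rw [show lam * (1 - 1/2) = lam * (1/2) by ring] at h2 ⊢
  exact Icc_union_same h1 h2

lemma tent_step {lam : ℝ} (hl1 : 1 ≤ lam) (hl2 : lam ≤ 2) {u v : ℝ}
    (h0 : 0 ≤ u) (huv : u ≤ v) (h1 : v ≤ 1) :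
    ∃ p q : ℝ, tentT lam '' Icc u v = Icc p q ∧ 0 ≤ p ∧ p ≤ q ∧ q ≤ 1 ∧
      lam / 2 * (v - u) ≤ q - p ∧
      (¬ (u ≤ 1/2 ∧ 1/2 ≤ v) → q - p = lam * (v - u)) ∧
      (u ≤ 1/2 → 1/2 ≤ v → lam / 2 ≤ q) := by
  have hl0 : (0:ℝ) ≤ lam := by linarith
  rcases le_or_gt v (1/2) with hv | hv
  · refine ⟨lam * u, lam * v, tent_img_low hl0 huv hv, by positivity, by nlinarith,
      by nlinarith, by nlinarith, fun _ => by ring, fun hu hv' => by nlinarith⟩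
  rcases le_or_gt u (1/2) with hu | hu
  · have hmin1 := min_le_left (lam * u) (lam * (1 - v))
    have hmin2 := min_le_right (lam * u) (lam * (1 - v))
    refine ⟨min (lam * u) (lam * (1 - v)), lam * (1/2), tent_img_mid hl0 hu hv.le, ?_, ?_, ?_, ?_, ?_, ?_⟩
    · exact le_min (by positivity) (by nlinarith)
    · nlinarith
    · nlinarith
    · nlinarith
    · intro h; exact absurd ⟨hu, hv.le⟩ h
    · intro _ _; nlinarith
  · refine ⟨lam * (1 - v), lam * (1 - u), tent_img_high hl0 huv hu.le, by nlinarith,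
      by nlinarith, by nlinarith, by nlinarith, fun _ => by ring, fun hu' _ => by linarith⟩

lemma iter_img (f : ℝ → ℝ) (n : ℕ) (S : Set ℝ) :
    f^[n + 1] '' S = f '' (f^[n] '' S) := by
  rw [Function.iterate_succ', Set.image_comp]

lemma iter_add_img (f : ℝ → ℝ) (m n : ℕ) (S : Set ℝ) :
    f^[m] '' (f^[n] '' S) = f^[m + n] '' S := by
  rw [Function.iterate_add, Set.image_comp]

lemma tent_two_step {lam : ℝ} (hl1 : 1 ≤ lam) (hl2 : lam ≤ 2) {u v : ℝ}
    (h0 : 0 ≤ u) (huv : u ≤ v) (h1 : v ≤ 1) :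
    (∃ k : ℕ, (1:ℝ)/2 ∈ (tentT lam)^[k] '' Icc u v ∧ (1:ℝ)/2 ∈ (tentT lam)^[k+1] '' Icc u v) ∨
    (∃ p q : ℝ, tentT lam '' (tentT lam '' Icc u v) = Icc p q ∧ 0 ≤ p ∧ p ≤ q ∧ q ≤ 1 ∧
      lam ^ 2 / 2 * (v - u) ≤ q - p) := by
  obtain ⟨p₁, q₁, heq₁, hp₁0, hpq₁, hq₁1, hlen₁, haff₁, hmid₁⟩ := tent_step hl1 hl2 h0 huv h1
  by_cases h : u ≤ 1/2 ∧ 1/2 ≤ v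
  · have hq₁ : lam / 2 ≤ q₁ := hmid₁ h.1 h.2
    by_cases hp : p₁ ≤ 1/2
    · left
      refine ⟨0, ?_, ?_⟩
      · simp only [Function.iterate_zero, Set.image_id]
        exact ⟨h.1, h.2⟩
      · simp only [zero_add, Function.iterate_one, heq₁]
        exact ⟨hp, by linarith⟩
    · right
      push_neg at hp
      obtain ⟨p₂, q₂, heq₂, hp₂0, hpq₂, hq₂1, _, haff₂, _⟩ := tent_step hl1 hl2 hp₁0 hpq₁ hq₁1
      refine ⟨p₂, q₂, by rw [heq₁, heq₂], hp₂0, hpq₂, hq₂1, ?_⟩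
      have h2 : q₂ - p₂ = lam * (q₁ - p₁) := haff₂ (by rintro ⟨h1', _⟩; linarith)
      nlinarith
  · have hlen : q₁ - p₁ = lam * (v - u) := haff₁ h
    obtain ⟨p₂, q₂, heq₂, hp₂0, hpq₂, hq₂1, hlen₂, haff₂, hmid₂⟩ := tent_step hl1 hl2 hp₁0 hpq₁ hq₁1
    by_cases h' : p₁ ≤ 1/2 ∧ 1/2 ≤ q₁
    · by_cases hp : p₂ ≤ 1/2
      · left
        refine ⟨1, ?_, ?_⟩
        · simp only [Function.iterate_one, heq₁]; exact ⟨h'.1, h'.2⟩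
        · rw [iter_img]
          simp only [Function.iterate_one, heq₁, heq₂]
          exact ⟨hp, by linarith [hmid₂ h'.1 h'.2]⟩
      · right
        exact ⟨p₂, q₂, by rw [heq₁, heq₂], hp₂0, hpq₂, hq₂1, by nlinarith⟩
    · right
      have h2 : q₂ - p₂ = lam * (q₁ - p₁) := haff₂ h'
      exact ⟨p₂, q₂, by rw [heq₁, heq₂], hp₂0, hpq₂, hq₂1, by nlinarith⟩

lemma tent_grow {lam : ℝ} (hl1 : 1 ≤ lam) (hl2 : lam ≤ 2) :
    ∀ n : ℕ, ∀ u v : ℝ, 0 ≤ u → u ≤ v → v ≤ 1 → 1 < (lam ^ 2 / 2) ^ n * (v - u) →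
    ∃ k : ℕ, (1:ℝ)/2 ∈ (tentT lam)^[k] '' Icc u v ∧ (1:ℝ)/2 ∈ (tentT lam)^[k+1] '' Icc u v := by
  intro n
  induction n with
  | zero => intro u v h0 huv h1 hbig; exfalso; simp only [pow_zero, one_mul] at hbig; linarith
  | succ n ih =>
    intro u v h0 huv h1 hbig
    rcases tent_two_step hl1 hl2 h0 huv h1 with hdone | ⟨p, q, heq, hp0, hpq, hq1, hlen⟩
    · exact hdone
    · have hpow : (0:ℝ) ≤ (lam ^ 2 / 2) ^ n := by positivity
      have hbig' : 1 < (lam ^ 2 / 2) ^ n * (q - p) := by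
        calc (1:ℝ) < (lam ^ 2 / 2) ^ (n+1) * (v - u) := hbig
          _ = (lam ^ 2 / 2) ^ n * (lam ^ 2 / 2 * (v - u)) := by rw [pow_succ]; ring
          _ ≤ (lam ^ 2 / 2) ^ n * (q - p) := by
              exact mul_le_mul_of_nonneg_left hlen hpow
      obtain ⟨k, m1, m2⟩ := ih p q hp0 hpq hq1 hbig'
      have key : ∀ m : ℕ, (tentT lam)^[m] '' Icc p q = (tentT lam)^[m + 2] '' Icc u v := by
        intro m
        have e : tentT lam '' (tentT lam '' Icc u v) = (tentT lam)^[2] '' Icc u v := by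
          have := iter_add_img (tentT lam) 1 1 (Icc u v)
          simpa using this
        rw [← heq, e, iter_add_img]
      refine ⟨k + 2, ?_, ?_⟩
      · rw [← key k]; exact m1
      · rw [show k + 2 + 1 = k + 1 + 2 from rfl, ← key (k+1)]; exact m2

lemma tent_fast {lam : ℝ} (hs : Real.sqrt 2 < lam) (hl2 : lam ≤ 2) {a b : ℝ} (hab : a < b)
    (hsub : Icc a b ⊆ Icc (lam - lam ^ 2 / 2) (lam / 2)) :
    ∃ k : ℕ, (1:ℝ)/2 ∈ (tentT lam)^[k] '' Icc a b ∧ (1:ℝ)/2 ∈ (tentT lam)^[k+1] '' Icc a b := by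
  have hsq : (Real.sqrt 2) ^ 2 = 2 := Real.sq_sqrt (by norm_num)
  have hs0 := Real.sqrt_nonneg 2
  have hl1 : 1 ≤ lam := by nlinarith
  have hgt : 1 < lam ^ 2 / 2 := by nlinarith
  have ha : a ∈ Icc (lam - lam ^ 2 / 2) (lam / 2) := hsub ⟨le_rfl, hab.le⟩
  have hb : b ∈ Icc (lam - lam ^ 2 / 2) (lam / 2) := hsub ⟨hab.le, le_rfl⟩
  have h0a : 0 ≤ a := by nlinarith [ha.1]
  have hb1 : b ≤ 1 := by linarith [hb.2]
  obtain ⟨n, hn⟩ := pow_unbounded_of_one_lt (1 / (b - a)) hgt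
  refine tent_grow hl1 hl2 n a b h0a hab.le hb1 ?_
  rw [div_lt_iff₀ (by linarith)] at hn
  linarith [hn]

lemma tent_core_mapsto {lam : ℝ} (hl1 : 1 ≤ lam) (hl2 : lam ≤ 2) :
    Set.MapsTo (tentT lam) (Icc (lam - lam ^ 2 / 2) (lam / 2))
      (Icc (lam - lam ^ 2 / 2) (lam / 2)) := by
  intro x hx
  obtain ⟨hx1, hx2⟩ := hx
  rcases le_total x (1 - x) with h | h
  · rw [show tentT lam x = lam * x from by simp [tentT, min_eq_left h]]
    constructor <;> nlinarith
  · rw [show tentT lam x = lam * (1 - x) from by simp [tentT, min_eq_right h]]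
    constructor <;> nlinarith

lemma tent_interval_images {lam : ℝ} (hl1 : 1 ≤ lam) (hl2 : lam ≤ 2) {u v : ℝ}
    (h0 : 0 ≤ u) (huv : u ≤ v) (h1 : v ≤ 1) (n : ℕ) :
    ∃ p q : ℝ, (tentT lam)^[n] '' Icc u v = Icc p q ∧ 0 ≤ p ∧ p ≤ q ∧ q ≤ 1 := by
  induction n with
  | zero => exact ⟨u, v, by simp, h0, huv, h1⟩
  | succ n ih =>
    obtain ⟨p, q, heq, hp0, hpq, hq1⟩ := ih
    obtain ⟨p', q', heq', hp'0, hpq', hq'1, _, _, _⟩ := tent_step hl1 hl2 hp0 hpq hq1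
    exact ⟨p', q', by rw [iter_img, heq, heq'], hp'0, hpq', hq'1⟩

lemma tent_leo {lam : ℝ} (hs : Real.sqrt 2 < lam) (hl2 : lam ≤ 2) {a b : ℝ} (hab : a < b)
    (hsub : Icc a b ⊆ Icc (lam - lam ^ 2 / 2) (lam / 2)) :
    ∃ n : ℕ, (tentT lam)^[n] '' Icc a b = Icc (lam - lam ^ 2 / 2) (lam / 2) := by
  have hsq : (Real.sqrt 2) ^ 2 = 2 := Real.sq_sqrt (by norm_num)
  have hs0 := Real.sqrt_nonneg 2
  have hl1 : 1 ≤ lam := by nlinarith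
  obtain ⟨k, m1, m2⟩ := tent_fast hs hl2 hab hsub
  have ha : a ∈ Icc (lam - lam ^ 2 / 2) (lam / 2) := hsub ⟨le_rfl, hab.le⟩
  have hb : b ∈ Icc (lam - lam ^ 2 / 2) (lam / 2) := hsub ⟨hab.le, le_rfl⟩
  have h0a : 0 ≤ a := by nlinarith [ha.1]
  have hb1 : b ≤ 1 := by linarith [hb.2]
  obtain ⟨p, q, heq, hp0, hpq, hq1⟩ := tent_interval_images hl1 hl2 h0a hab.le hb1 (k + 1)
  -- 1/2 ∈ [p,q]
  rw [heq] at m2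
  -- lam/2 ∈ [p,q] since T (1/2) = lam/2
  have hhalf : tentT lam (1/2) = lam / 2 := by norm_num [tentT]; ring
  have hl2m : lam / 2 ∈ Icc p q := by
    rw [← heq, iter_img]
    rw [← hhalf]
    exact Set.mem_image_of_mem _ m1
  have hIccsub : Icc (1/2 : ℝ) (lam / 2) ⊆ Icc p q :=
    Icc_subset_Icc m2.1 hl2m.2
  have himg : tentT lam '' Icc (1/2 : ℝ) (lam / 2) = Icc (lam - lam ^ 2 / 2) (lam / 2) := by
    rw [tent_img_high (by linarith) (by linarith) le_rfl]
    congr 1 <;> ring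
  refine ⟨k + 2, le_antisymm ?_ ?_⟩
  · have hmt := (tent_core_mapsto hl1 hl2).iterate (k + 2)
    exact (Set.image_mono hsub).trans hmt.image_subset
  · rw [show k + 2 = (k + 1) + 1 from rfl, iter_img, heq, ← himg]
    exact Set.image_mono hIccsub

/-- a piecewise linear unimodal map of constant slope `λ > √2` has no
slow intervals, and is locally eventually onto its core. -/
theorem stmt_14 (G : PwMono 2) (lam : ℝ) (hlam : Real.sqrt 2 < lam)
    -- g is piecewise linear of constant slope ±λ
    (hslope : ∀ k < 2, ∀ x ∈ Set.Icc (G.c k) (G.c (k + 1)),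
      ∀ y ∈ Set.Icc (G.c k) (G.c (k + 1)), |G.f x - G.f y| = lam * |x - y|)
    -- normalization: g(0) = g(1) = 0, g increasing on [0,c], decreasing on [c,1]
    (h0 : G.f 0 = 0) (h1 : G.f 1 = 0)
    (hup : StrictMonoOn G.f (Set.Icc (G.c 0) (G.c 1)))
    (hdown : StrictAntiOn G.f (Set.Icc (G.c 1) (G.c 2))) :
    (∀ a b : ℝ, a < b →
      Set.Icc a b ⊆ Set.Icc (G.f (G.f (G.c 1))) (G.f (G.c 1)) →
      ∃ k : ℕ, G.c 1 ∈ G.f^[k] '' Set.Icc a b ∧ G.c 1 ∈ G.f^[k + 1] '' Set.Icc a b) ∧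
    ∀ a b : ℝ, a < b →
      Set.Icc a b ⊆ Set.Icc (G.f (G.f (G.c 1))) (G.f (G.c 1)) →
      ∃ n : ℕ, G.f^[n] '' Set.Icc a b = Set.Icc (G.f (G.f (G.c 1))) (G.f (G.c 1)) := by
  have hsq : (Real.sqrt 2) ^ 2 = 2 := Real.sq_sqrt (by norm_num)
  have hs0 := Real.sqrt_nonneg 2
  have hl1 : 1 ≤ lam := by nlinarith
  have hlam0 : 0 < lam := by linarith
  have hc01 : G.c 0 < G.c 1 := G.cmono (by simp) (by simp) (by norm_num)
  have hc12 : G.c 1 < G.c 2 := G.cmono (by simp) (by simp) (by norm_num)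
  have hc0 : G.c 0 = 0 := G.c0
  have hc2 : G.c 2 = 1 := G.cd
  have hc1pos : 0 < G.c 1 := by rw [← hc0]; exact hc01
  have hc1lt : G.c 1 < 1 := by rw [← hc2]; exact hc12
  -- left branch formula
  have fleft : ∀ x ∈ Icc (0:ℝ) (G.c 1), G.f x = lam * x := by
    intro x hx
    have h := hslope 0 (by norm_num) x (by rw [hc0]; exact hx) 0 (by rw [hc0]; exact ⟨le_rfl, hc1pos.le⟩)
    rw [h0, sub_zero, sub_zero] at h
    have hfx : 0 ≤ G.f x := (G.maps ⟨hx.1, hx.2.trans hc1lt.le⟩).1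
    rwa [abs_of_nonneg hfx, abs_of_nonneg hx.1] at h
  -- right branch formula
  have fright : ∀ x ∈ Icc (G.c 1) (1:ℝ), G.f x = lam * (1 - x) := by
    intro x hx
    have h := hslope 1 (by norm_num) x (by rw [hc2]; exact hx) 1 (by rw [hc2]; exact ⟨hc1lt.le, le_rfl⟩)
    rw [h1, sub_zero] at h
    have hfx : 0 ≤ G.f x := (G.maps ⟨hc1pos.le.trans hx.1, hx.2⟩).1
    rw [abs_of_nonneg hfx, abs_of_nonpos (by linarith [hx.2])] at h
    linear_combination h
  -- turning point is 1/2
  have hchalf : G.c 1 = 1/2 := by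
    have l := fleft (G.c 1) ⟨hc1pos.le, le_rfl⟩
    have r := fright (G.c 1) ⟨le_rfl, hc1lt.le⟩
    have : lam * G.c 1 = lam * (1 - G.c 1) := by rw [← l, r]
    have := mul_left_cancel₀ (ne_of_gt hlam0) this
    linarith
  have hl2 : lam ≤ 2 := by
    have := (G.maps ⟨hc1pos.le, hc1lt.le⟩).2
    rw [fleft (G.c 1) ⟨hc1pos.le, le_rfl⟩, hchalf] at this
    linarith
  -- G.f agrees with the tent map on [0,1]
  have hT : ∀ x ∈ Icc (0:ℝ) 1, G.f x = tentT lam x := by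
    intro x hx
    rcases le_total x (1/2) with hhalf | hhalf
    · rw [fleft x ⟨hx.1, by rw [hchalf]; exact hhalf⟩]
      unfold tentT
      rw [min_eq_left (by linarith)]
    · rw [fright x ⟨by rw [hchalf]; exact hhalf, hx.2⟩]
      unfold tentT
      rw [min_eq_right (by linarith)]
  -- iterates agree on [0,1]
  have hiter : ∀ n : ℕ, ∀ x ∈ Icc (0:ℝ) 1,
      G.f^[n] x = (tentT lam)^[n] x ∧ G.f^[n] x ∈ Icc (0:ℝ) 1 := by
    intro n
    induction n with
    | zero => intro x hx; simpa using hx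
    | succ n ih =>
      intro x hx
      obtain ⟨he, hm⟩ := ih x hx
      rw [Function.iterate_succ_apply', Function.iterate_succ_apply']
      exact ⟨by rw [hT _ hm, he], G.maps hm⟩
  have himgeq : ∀ n : ℕ, ∀ S : Set ℝ, S ⊆ Icc (0:ℝ) 1 →
      G.f^[n] '' S = (tentT lam)^[n] '' S := by
    intro n S hS
    exact Set.image_congr fun x hx => (hiter n x (hS hx)).1
  -- core endpoints
  have hfc : G.f (G.c 1) = lam / 2 := by
    rw [fleft (G.c 1) ⟨hc1pos.le, le_rfl⟩, hchalf]; ring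
  have hffc : G.f (G.f (G.c 1)) = lam - lam ^ 2 / 2 := by
    rw [hfc, fright (lam/2) ⟨by rw [hchalf]; linarith, by linarith⟩]; ring
  have hcore01 : Icc (lam - lam ^ 2 / 2) (lam / 2) ⊆ Icc (0:ℝ) 1 :=
    Icc_subset_Icc (by nlinarith) (by linarith)
  constructor
  · intro a b hab hsub
    rw [hffc, hfc] at hsub
    obtain ⟨k, m1, m2⟩ := tent_fast hlam hl2 hab hsub
    have hs01 : Icc a b ⊆ Icc (0:ℝ) 1 := hsub.trans hcore01
    refine ⟨k, ?_, ?_⟩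
    · rw [hchalf, himgeq k _ hs01]; exact m1
    · rw [hchalf, himgeq (k+1) _ hs01]; exact m2
  · intro a b hab hsub
    rw [hffc, hfc] at hsub ⊢
    obtain ⟨n, hn⟩ := tent_leo hlam hl2 hab hsub
    exact ⟨n, by rw [himgeq n _ (hsub.trans hcore01)]; exact hn⟩
end

section
/- If J₁ and J₂ are slow intervals for a unimodal map f with nonempty intersection, then J₁ ∪ J₂ is also a slow interval. -/
open Set

open Filter

open scoped ENNReal

namespace Stmt15Aux

variable (F : PwMono 2)

/-- The turning point is in `[0,1]`. -/
lemma c_mem : F.c 1 ∈ Icc (0:ℝ) 1 := by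
  have h01 : F.c 0 < F.c 1 := F.cmono (by simp) (by simp) (by norm_num)
  have h12 : F.c 1 < F.c 2 := F.cmono (by simp) (by simp) (by norm_num)
  rw [F.c0] at h01
  rw [F.cd] at h12
  exact ⟨h01.le, h12.le⟩

/-- Branch 0 : `f` is monotone or antitone on `[0, c]`. -/
lemma branch0 : MonotoneOn F.f (Icc 0 (F.c 1)) ∨ AntitoneOn F.f (Icc 0 (F.c 1)) := by
  have := F.piece 0 (by norm_num)
  rw [F.c0] at this
  exact this.imp (fun h => h.monotoneOn) (fun h => h.antitoneOn)

/-- Branch 1 : `f` is monotone or antitone on `[c, 1]`. -/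
lemma branch1 : MonotoneOn F.f (Icc (F.c 1) 1) ∨ AntitoneOn F.f (Icc (F.c 1) 1) := by
  have := F.piece 1 (by norm_num)
  rw [show (1:ℕ)+1 = 2 by norm_num, F.cd] at this
  exact this.imp (fun h => h.monotoneOn) (fun h => h.antitoneOn)

/-- Variation of a composition `g ∘ f` over a set lying inside one monotone branch. -/
lemma comp_branch (g : ℝ → ℝ) {p q : ℝ}
    (hsub : Icc p q ⊆ Icc 0 (F.c 1) ∨ Icc p q ⊆ Icc (F.c 1) 1) :
    eVariationOn (g ∘ F.f) (Icc p q) ≤ eVariationOn g (F.f '' Icc p q) := by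
  rcases hsub with hsub | hsub
  · rcases branch0 F with h | h
    · exact eVariationOn.comp_le_of_monotoneOn g F.f (h.mono hsub) (mapsTo_image _ _)
    · exact eVariationOn.comp_le_of_antitoneOn g F.f (h.mono hsub) (mapsTo_image _ _)
  · rcases branch1 F with h | h
    · exact eVariationOn.comp_le_of_monotoneOn g F.f (h.mono hsub) (mapsTo_image _ _)
    · exact eVariationOn.comp_le_of_antitoneOn g F.f (h.mono hsub) (mapsTo_image _ _)

/-- If `c ∉ [p,q]` there is no splitting. -/
lemma step' (g : ℝ → ℝ) {p q : ℝ} (h0 : 0 ≤ p) (h1 : q ≤ 1)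
    (hc : F.c 1 ∉ Icc p q) :
    eVariationOn (g ∘ F.f) (Icc p q) ≤ eVariationOn g (F.f '' Icc p q) := by
  rcases lt_or_ge q (F.c 1) with h | h
  · exact comp_branch F g (Or.inl (Icc_subset_Icc h0 h.le))
  · have hp : F.c 1 < p := lt_of_not_ge (fun hpc => hc ⟨hpc, h⟩)
    exact comp_branch F g (Or.inr (Icc_subset_Icc hp.le h1))

/-- General one-step bound: the variation at most doubles. -/
lemma step (g : ℝ → ℝ) {p q : ℝ} (h0 : 0 ≤ p) (h1 : q ≤ 1) :
    eVariationOn (g ∘ F.f) (Icc p q) ≤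
      eVariationOn g (F.f '' Icc p q) + eVariationOn g (F.f '' Icc p q) := by
  by_cases hc : F.c 1 ∈ Icc p q
  · obtain ⟨hpc, hcq⟩ := hc
    have hgreat : IsGreatest (Icc p (F.c 1)) (F.c 1) := ⟨⟨hpc, le_rfl⟩, fun y hy => hy.2⟩
    have hleast : IsLeast (Icc (F.c 1) q) (F.c 1) := ⟨⟨le_rfl, hcq⟩, fun y hy => hy.1⟩
    have hunion := eVariationOn.union (g ∘ F.f) hgreat hleast
    rw [Icc_union_Icc_eq_Icc hpc hcq] at hunion
    rw [hunion]
    have hA : eVariationOn (g ∘ F.f) (Icc p (F.c 1)) ≤ eVariationOn g (F.f '' Icc p q) := by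
      refine (comp_branch F g (Or.inl (Icc_subset_Icc h0 le_rfl))).trans ?_
      exact eVariationOn.mono g (image_mono (Icc_subset_Icc le_rfl hcq))
    have hB : eVariationOn (g ∘ F.f) (Icc (F.c 1) q) ≤ eVariationOn g (F.f '' Icc p q) := by
      refine (comp_branch F g (Or.inr (Icc_subset_Icc le_rfl h1))).trans ?_
      exact eVariationOn.mono g (image_mono (Icc_subset_Icc hpc le_rfl))
    exact add_le_add hA hB
  · exact (step' F g h0 h1 hc).trans (self_le_add_right _ _)

/-- The image of an interval in `[0,1]` is again an interval in `[0,1]`. -/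
lemma img {p q : ℝ} (h0 : 0 ≤ p) (hpq : p ≤ q) (h1 : q ≤ 1) :
    ∃ p' q' : ℝ, 0 ≤ p' ∧ p' ≤ q' ∧ q' ≤ 1 ∧ F.f '' Icc p q = Icc p' q' := by
  have hsub : Icc p q ⊆ Icc (0:ℝ) 1 := Icc_subset_Icc h0 h1
  have hcont : ContinuousOn F.f (Icc p q) := F.cont.mono hsub
  have heq := hcont.image_Icc hpq
  have hne : (F.f '' Icc p q).Nonempty := ⟨F.f p, mem_image_of_mem _ ⟨le_rfl, hpq⟩⟩
  have hcomp : IsCompact (F.f '' Icc p q) := isCompact_Icc.image_of_continuousOn hcont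
  refine ⟨_, _, ?_, ?_, ?_, heq⟩
  · obtain ⟨x, hx, hfx⟩ := hcomp.sInf_mem hne
    have := F.maps (hsub hx)
    rw [hfx] at this
    exact this.1
  · have hne' := hne
    rw [heq] at hne'
    exact nonempty_Icc.mp hne'
  · obtain ⟨x, hx, hfx⟩ := hcomp.sSup_mem hne
    have := F.maps (hsub hx)
    rw [hfx] at this
    exact this.2

/-- Slowness predicate. -/
def Slow (p q : ℝ) : Prop :=
  ¬ ∃ k : ℕ, F.c 1 ∈ F.f^[k] '' Icc p q ∧ F.c 1 ∈ F.f^[k + 1] '' Icc p q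

lemma slow_image {p q p' q' : ℝ} (himg : F.f '' Icc p q = Icc p' q')
    (hs : Slow F p q) : Slow F p' q' := by
  rintro ⟨k, hk1, hk2⟩
  refine hs ⟨k + 1, ?_, ?_⟩
  · rw [Function.iterate_succ, Set.image_comp, himg]; exact hk1
  · rw [Function.iterate_succ, Set.image_comp, himg]; exact hk2

lemma slow_not_both {p q : ℝ} (hs : Slow F p q) :
    ¬ (F.c 1 ∈ Icc p q ∧ F.c 1 ∈ F.f '' Icc p q) := by
  rintro ⟨h1, h2⟩
  exact hs ⟨0, by simpa using h1, by simpa using h2⟩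

/-- Variation of `id` on a subset of `[0,1]` is at most `1`. -/
lemma id_var {s : Set ℝ} (hs : s ⊆ Icc (0:ℝ) 1) : eVariationOn id s ≤ 1 := by
  refine (eVariationOn.mono id hs).trans ?_
  have h : MonotoneOn (id : ℝ → ℝ) (Icc (0:ℝ) 1) := fun x _ y _ hxy => hxy
  have := h.eVariationOn_le (left_mem_Icc.mpr zero_le_one) (right_mem_Icc.mpr zero_le_one)
  rw [Set.inter_self] at this
  simpa using this

/-- MAIN LEMMA: slow intervals have variation growth at most `2^(n/2)`-ish. -/
lemma main : ∀ m : ℕ, ∀ p q : ℝ, 0 ≤ p → p ≤ q → q ≤ 1 → Slow F p q →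
    eVariationOn (F.f^[2*m]) (Icc p q) ≤ 2^m ∧
    eVariationOn (F.f^[2*m+1]) (Icc p q) ≤ 2^(m+1) := by
  intro m
  induction m with
  | zero =>
    intro p q h0 hpq h1 _
    constructor
    · simpa using id_var (Icc_subset_Icc h0 h1)
    · obtain ⟨p', q', h0', hpq', h1', himg⟩ := img F h0 hpq h1
      have hrw : F.f^[2*0+1] = (id : ℝ → ℝ) ∘ F.f := by
        funext x; simp
      rw [hrw]
      calc eVariationOn ((id : ℝ → ℝ) ∘ F.f) (Icc p q)
          ≤ eVariationOn id (F.f '' Icc p q) + eVariationOn id (F.f '' Icc p q) :=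
            step F id h0 h1
        _ ≤ 1 + 1 := by
            rw [himg]
            exact add_le_add (id_var (Icc_subset_Icc h0' h1')) (id_var (Icc_subset_Icc h0' h1'))
        _ ≤ 2^(0+1) := by norm_num
  | succ m ih =>
    -- first establish the even bound for all slow intervals
    have heven : ∀ p q : ℝ, 0 ≤ p → p ≤ q → q ≤ 1 → Slow F p q →
        eVariationOn (F.f^[2*(m+1)]) (Icc p q) ≤ 2^(m+1) := by
      intro p q h0 hpq h1 hslow
      obtain ⟨p₁, q₁, h0₁, hpq₁, h1₁, himg₁⟩ := img F h0 hpq h1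
      have hslow₁ : Slow F p₁ q₁ := slow_image F himg₁ hslow
      have hrw : F.f^[2*(m+1)] = F.f^[2*m+1] ∘ F.f := by
        rw [show 2*(m+1) = (2*m+1)+1 by ring, Function.iterate_succ]
      by_cases hc : F.c 1 ∈ Icc p q
      · -- split once; then c ∉ image, so no splitting at the next step
        have hc₁ : F.c 1 ∉ Icc p₁ q₁ := by
          intro hmem
          exact slow_not_both F hslow ⟨hc, by rw [himg₁]; exact hmem⟩
        obtain ⟨p₂, q₂, h0₂, hpq₂, h1₂, himg₂⟩ := img F h0₁ hpq₁ h1₁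
        have hslow₂ : Slow F p₂ q₂ := slow_image F himg₂ hslow₁
        have hstep1 : eVariationOn (F.f^[2*(m+1)]) (Icc p q) ≤
            eVariationOn (F.f^[2*m+1]) (Icc p₁ q₁) + eVariationOn (F.f^[2*m+1]) (Icc p₁ q₁) := by
          rw [hrw, ← himg₁]
          exact step F _ h0 h1
        have hstep2 : eVariationOn (F.f^[2*m+1]) (Icc p₁ q₁) ≤
            eVariationOn (F.f^[2*m]) (Icc p₂ q₂) := by
          rw [Function.iterate_succ, ← himg₂]
          exact step' F _ h0₁ h1₁ hc₁
        have hIH := (ih p₂ q₂ h0₂ hpq₂ h1₂ hslow₂).1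
        calc eVariationOn (F.f^[2*(m+1)]) (Icc p q)
            ≤ eVariationOn (F.f^[2*m+1]) (Icc p₁ q₁) + eVariationOn (F.f^[2*m+1]) (Icc p₁ q₁) :=
              hstep1
          _ ≤ eVariationOn (F.f^[2*m]) (Icc p₂ q₂) + eVariationOn (F.f^[2*m]) (Icc p₂ q₂) :=
              add_le_add hstep2 hstep2
          _ ≤ 2^m + 2^m := add_le_add hIH hIH
          _ = 2^(m+1) := by ring
      · -- no splitting at the first step
        have hIH := (ih p₁ q₁ h0₁ hpq₁ h1₁ hslow₁).2
        calc eVariationOn (F.f^[2*(m+1)]) (Icc p q)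
            ≤ eVariationOn (F.f^[2*m+1]) (Icc p₁ q₁) := by
              rw [hrw, ← himg₁]
              exact step' F _ h0 h1 hc
          _ ≤ 2^(m+1) := hIH
    intro p q h0 hpq h1 hslow
    refine ⟨heven p q h0 hpq h1 hslow, ?_⟩
    -- odd bound: one more (possibly splitting) step
    obtain ⟨p₁, q₁, h0₁, hpq₁, h1₁, himg₁⟩ := img F h0 hpq h1
    have hslow₁ : Slow F p₁ q₁ := slow_image F himg₁ hslow
    have hrw : F.f^[2*(m+1)+1] = F.f^[2*(m+1)] ∘ F.f := Function.iterate_succ _ _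
    have hE := heven p₁ q₁ h0₁ hpq₁ h1₁ hslow₁
    calc eVariationOn (F.f^[2*(m+1)+1]) (Icc p q)
        ≤ eVariationOn (F.f^[2*(m+1)]) (Icc p₁ q₁) + eVariationOn (F.f^[2*(m+1)]) (Icc p₁ q₁) := by
          rw [hrw, ← himg₁]
          exact step F _ h0 h1
      _ ≤ 2^(m+1) + 2^(m+1) := add_le_add hE hE
      _ = 2^(m+1+1) := by ring

/-- Uniform bound for all `n`. -/
lemma varbound {p q : ℝ} (h0 : 0 ≤ p) (hpq : p ≤ q) (h1 : q ≤ 1) (hslow : Slow F p q) (n : ℕ) :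
    eVariationOn (F.f^[n]) (Icc p q) ≤ 2^(n/2+1) := by
  have h2 : (2:ℝ≥0∞)^(n/2) ≤ 2^(n/2+1) := by
    rw [pow_succ]
    exact le_mul_of_one_le_right' one_le_two
  rcases Nat.even_or_odd n with ⟨m, hm⟩ | ⟨m, hm⟩
  · have := (main F (n/2) p q h0 hpq h1 hslow).1
    rw [show 2*(n/2) = n by omega] at this
    exact this.trans h2
  · have := (main F (n/2) p q h0 hpq h1 hslow).2
    rw [show 2*(n/2)+1 = n by omega] at this
    exact this

end Stmt15Aux

open Stmt15Aux

/-- if `J₁`, `J₂` are slow intervals for a unimodal map with nonempty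
intersection, then `J₁ ∪ J₂` is slow.  (Here `λ = e^{h_top(f)} > √2`, and the
characterization "fast ⟺ liminf Var_J(fⁿ)/λⁿ > 0" holds.) -/
theorem stmt_15 (F : PwMono 2) (lam : ℝ) (hlam : Real.sqrt 2 < lam)
    -- the characterization of fast intervals via the growth of variation
    (hchar : ∀ a b : ℝ, 0 ≤ a → a ≤ b → b ≤ 1 →
      ((∃ k : ℕ, F.c 1 ∈ F.f^[k] '' Set.Icc a b ∧ F.c 1 ∈ F.f^[k + 1] '' Set.Icc a b) ↔
        0 < atTop.liminf fun n : ℕ => (eVariationOn (F.f^[n]) (Set.Icc a b)).toReal / lam ^ n))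
    (a₁ b₁ a₂ b₂ : ℝ) (h₁ : 0 ≤ a₁) (h₁' : a₁ ≤ b₁) (h₁'' : b₁ ≤ 1)
    (h₂ : 0 ≤ a₂) (h₂' : a₂ ≤ b₂) (h₂'' : b₂ ≤ 1)
    (hmeet : (Set.Icc a₁ b₁ ∩ Set.Icc a₂ b₂).Nonempty)
    (hslow₁ : ¬ ∃ k : ℕ, F.c 1 ∈ F.f^[k] '' Set.Icc a₁ b₁ ∧
      F.c 1 ∈ F.f^[k + 1] '' Set.Icc a₁ b₁)
    (hslow₂ : ¬ ∃ k : ℕ, F.c 1 ∈ F.f^[k] '' Set.Icc a₂ b₂ ∧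
      F.c 1 ∈ F.f^[k + 1] '' Set.Icc a₂ b₂) :
    ¬ ∃ k : ℕ, F.c 1 ∈ F.f^[k] '' (Set.Icc a₁ b₁ ∪ Set.Icc a₂ b₂) ∧
      F.c 1 ∈ F.f^[k + 1] '' (Set.Icc a₁ b₁ ∪ Set.Icc a₂ b₂) := by
  intro hfast
  obtain ⟨t, ⟨ht1, ht2⟩, ⟨ht3, ht4⟩⟩ := hmeet
  set a := min a₁ a₂ with ha
  set b := max b₁ b₂ with hb
  -- the union is an interval
  have hU : Set.Icc a₁ b₁ ∪ Set.Icc a₂ b₂ = Set.Icc a b := by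
    apply Set.Subset.antisymm
    · exact Set.union_subset (Set.Icc_subset_Icc (min_le_left _ _) (le_max_left _ _))
        (Set.Icc_subset_Icc (min_le_right _ _) (le_max_right _ _))
    · rintro x ⟨hxa, hxb⟩
      rcases le_total x t with hxt | htx
      · rcases le_total a₁ a₂ with h | h
        · left
          exact ⟨by rw [ha, min_eq_left h] at hxa; exact hxa, hxt.trans ht2⟩
        · right
          exact ⟨by rw [ha, min_eq_right h] at hxa; exact hxa, hxt.trans ht4⟩
      · rcases le_total b₁ b₂ with h | h
        · right
          exact ⟨ht3.trans htx, by rw [hb, max_eq_right h] at hxb; exact hxb⟩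
        · left
          exact ⟨ht1.trans htx, by rw [hb, max_eq_left h] at hxb; exact hxb⟩
  have h0a : 0 ≤ a := le_min h₁ h₂
  have hab : a ≤ b := le_trans (min_le_left _ _) (le_trans h₁' (le_max_left _ _))
  have hb1 : b ≤ 1 := max_le h₁'' h₂''
  rw [hU] at hfast
  have hpos := (hchar a b h0a hab hb1).mp hfast
  -- variation bound for the union
  have hbound : ∀ n : ℕ, eVariationOn (F.f^[n]) (Set.Icc a b) ≤ 2^(n/2+2) := by
    intro n
    have hsplit : eVariationOn (F.f^[n]) (Set.Icc a b) ≤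
        eVariationOn (F.f^[n]) (Set.Icc a t) + eVariationOn (F.f^[n]) (Set.Icc t b) := by
      have hat : a ≤ t := le_trans (min_le_left _ _) ht1
      have htb : t ≤ b := le_trans ht2 (le_max_left _ _)
      have hgreat : IsGreatest (Set.Icc a t) t := ⟨⟨hat, le_rfl⟩, fun y hy => hy.2⟩
      have hleast : IsLeast (Set.Icc t b) t := ⟨⟨le_rfl, htb⟩, fun y hy => hy.1⟩
      have := eVariationOn.union (F.f^[n]) hgreat hleast
      rw [Set.Icc_union_Icc_eq_Icc hat htb] at this
      exact this.le
    have hL : eVariationOn (F.f^[n]) (Set.Icc a t) ≤ 2^(n/2+1) := by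
      rcases le_total a₁ a₂ with h | h
      · refine (eVariationOn.mono _ ?_).trans (varbound F h₁ h₁' h₁'' hslow₁ n)
        rw [ha, min_eq_left h]
        exact Set.Icc_subset_Icc le_rfl ht2
      · refine (eVariationOn.mono _ ?_).trans (varbound F h₂ h₂' h₂'' hslow₂ n)
        rw [ha, min_eq_right h]
        exact Set.Icc_subset_Icc le_rfl ht4
    have hR : eVariationOn (F.f^[n]) (Set.Icc t b) ≤ 2^(n/2+1) := by
      rcases le_total b₁ b₂ with h | h
      · refine (eVariationOn.mono _ ?_).trans (varbound F h₂ h₂' h₂'' hslow₂ n)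
        rw [hb, max_eq_right h]
        exact Set.Icc_subset_Icc ht3 le_rfl
      · refine (eVariationOn.mono _ ?_).trans (varbound F h₁ h₁' h₁'' hslow₁ n)
        rw [hb, max_eq_left h]
        exact Set.Icc_subset_Icc ht1 le_rfl
    calc eVariationOn (F.f^[n]) (Set.Icc a b)
        ≤ eVariationOn (F.f^[n]) (Set.Icc a t) + eVariationOn (F.f^[n]) (Set.Icc t b) := hsplit
      _ ≤ 2^(n/2+1) + 2^(n/2+1) := add_le_add hL hR
      _ = 2^(n/2+2) := by ring
  -- the normalized variation tends to 0
  have hsqrt2 : (0:ℝ) < Real.sqrt 2 := Real.sqrt_pos.mpr (by norm_num)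
  have hlam0 : (0:ℝ) < lam := hsqrt2.trans hlam
  have hone : (1:ℝ) ≤ Real.sqrt 2 := by
    rw [show (1:ℝ) = Real.sqrt 1 by simp]
    exact Real.sqrt_le_sqrt (by norm_num)
  have htend : Filter.Tendsto
      (fun n : ℕ => (eVariationOn (F.f^[n]) (Set.Icc a b)).toReal / lam ^ n)
      atTop (nhds 0) := by
    have hg : Filter.Tendsto (fun n : ℕ => 4 * (Real.sqrt 2 / lam) ^ n) atTop (nhds 0) := by
      have h0r : (0:ℝ) ≤ Real.sqrt 2 / lam := div_nonneg hsqrt2.le hlam0.le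
      have h1r : Real.sqrt 2 / lam < 1 := (div_lt_one hlam0).mpr hlam
      have := (tendsto_pow_atTop_nhds_zero_of_lt_one h0r h1r).const_mul (4:ℝ)
      simpa using this
    apply squeeze_zero
    · intro n
      exact div_nonneg ENNReal.toReal_nonneg (pow_pos hlam0 n).le
    · intro n
      have hfin : ((2:ℝ≥0∞)^(n/2+2)) ≠ ⊤ := ENNReal.pow_ne_top ENNReal.ofNat_ne_top
      have h1 : (eVariationOn (F.f^[n]) (Set.Icc a b)).toReal ≤ (2:ℝ)^(n/2+2) := by
        have := (ENNReal.toReal_le_toReal (ne_top_of_le_ne_top hfin (hbound n)) hfin).mpr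
          (hbound n)
        simpa [ENNReal.toReal_pow] using this
      have h2 : (2:ℝ)^(n/2+2) ≤ 4 * Real.sqrt 2 ^ n := by
        have hs : (2:ℝ)^(n/2) ≤ Real.sqrt 2 ^ n := by
          have h2eq : (2:ℝ) = Real.sqrt 2 ^ 2 := (Real.sq_sqrt (by norm_num)).symm
          calc (2:ℝ)^(n/2) = (Real.sqrt 2 ^ 2)^(n/2) := by rw [← h2eq]
            _ = Real.sqrt 2 ^ (2*(n/2)) := by rw [← pow_mul]
            _ ≤ Real.sqrt 2 ^ n := pow_le_pow_right₀ hone (by omega)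
        calc (2:ℝ)^(n/2+2) = 4 * 2^(n/2) := by ring
          _ ≤ 4 * Real.sqrt 2 ^ n := by linarith
      calc (eVariationOn (F.f^[n]) (Set.Icc a b)).toReal / lam ^ n
          ≤ (4 * Real.sqrt 2 ^ n) / lam ^ n := by
            exact div_le_div_of_nonneg_right (h1.trans h2) (pow_pos hlam0 n).le
        _ = 4 * (Real.sqrt 2 / lam) ^ n := by rw [div_pow]; ring
    · exact hg
  rw [htend.liminf_eq] at hpos
  exact lt_irrefl 0 hpos
end
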